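/- arXiv:2410.21765 — 7 statements merged into one kernel-verified Lean document; each statement's English description precedes it below -/
import Mathlib

section
/- Suppose $w \in C^2[0,\pi]$ is a positive solution on $(0,\pi)$ of $-w'' = \beta^2 w + c_1 w|w|^{2/\beta} + c_2 \sin\phi\, |w|^{1+3/\beta}$ with $w(0) = w(\pi) = 0$, where $c_1, c_2 \geq 0$ and $c_1 + c_2 > 0$ and $\beta \neq 0$. Then $|\beta| < 1$. -/
open Real MeasureTheory Set

/-- If `w ∈ C²[0,π]` is a positive solution on `(0,π)` of
`-w'' = β²w + c₁ w|w|^{2/β} + c₂ sin φ |w|^{1+3/β}` with `w(0)=w(π)=0`, where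
`c₁, c₂ ≥ 0`, `c₁ + c₂ > 0` and `β ≠ 0`, then `|β| < 1`. -/
theorem no_positive_solutions_for_large_beta (β c1 c2 : ℝ) (hβ : β ≠ 0)
    (hc1 : 0 ≤ c1) (hc2 : 0 ≤ c2) (hc : 0 < c1 + c2)
    (w : ℝ → ℝ) (hw : ContDiff ℝ 2 w)
    (hpos : ∀ φ ∈ Set.Ioo (0:ℝ) Real.pi, 0 < w φ)
    (hode : ∀ φ ∈ Set.Ioo (0:ℝ) Real.pi,
      -(deriv (deriv w) φ) = β ^ 2 * w φ + c1 * w φ * |w φ| ^ (2 / β)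
        + c2 * Real.sin φ * |w φ| ^ (1 + 3 / β))
    (h0 : w 0 = 0) (hπ : w Real.pi = 0) :
    |β| < 1 := by
  obtain ⟨hwdiff, -, hw1⟩ := (contDiff_succ_iff_deriv (n := 1)).mp (by exact_mod_cast hw)
  have hwdiff1 : Differentiable ℝ (deriv w) := hw1.differentiable one_ne_zero
  have hcontw : Continuous w := hwdiff.continuous
  have hcontw' : Continuous (deriv w) := hwdiff1.continuous
  have hcontw'' : Continuous (deriv (deriv w)) := hw1.continuous_deriv le_rfl
  -- First integration by parts: ∫ sin * w'' = -∫ cos * w'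
  have hsin : ∀ x ∈ Set.uIcc (0:ℝ) Real.pi, HasDerivAt Real.sin (Real.cos x) x :=
    fun x _ => Real.hasDerivAt_sin x
  have hcos : ∀ x ∈ Set.uIcc (0:ℝ) Real.pi, HasDerivAt Real.cos (-Real.sin x) x :=
    fun x _ => Real.hasDerivAt_cos x
  have hwd : ∀ x ∈ Set.uIcc (0:ℝ) Real.pi, HasDerivAt w (deriv w x) x :=
    fun x _ => (hwdiff x).hasDerivAt
  have hwd2 : ∀ x ∈ Set.uIcc (0:ℝ) Real.pi, HasDerivAt (deriv w) (deriv (deriv w) x) x :=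
    fun x _ => (hwdiff1 x).hasDerivAt
  have ibp1 : ∫ x in (0:ℝ)..Real.pi, Real.sin x * deriv (deriv w) x
      = Real.sin Real.pi * deriv w Real.pi - Real.sin 0 * deriv w 0
        - ∫ x in (0:ℝ)..Real.pi, Real.cos x * deriv w x :=
    intervalIntegral.integral_mul_deriv_eq_deriv_mul hsin hwd2
      (Real.continuous_cos.intervalIntegrable 0 Real.pi)
      (hcontw''.intervalIntegrable 0 Real.pi)
  have ibp2 : ∫ x in (0:ℝ)..Real.pi, Real.cos x * deriv w x
      = Real.cos Real.pi * w Real.pi - Real.cos 0 * w 0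
        - ∫ x in (0:ℝ)..Real.pi, (-Real.sin x) * w x :=
    intervalIntegral.integral_mul_deriv_eq_deriv_mul hcos hwd
      ((Real.continuous_sin.neg).intervalIntegrable 0 Real.pi)
      (hcontw'.intervalIntegrable 0 Real.pi)
  have key : ∫ x in (0:ℝ)..Real.pi, Real.sin x * deriv (deriv w) x
      = -∫ x in (0:ℝ)..Real.pi, Real.sin x * w x := by
    rw [ibp1, ibp2, Real.sin_pi, Real.sin_zero, h0, hπ]
    have : ∫ x in (0:ℝ)..Real.pi, (-Real.sin x) * w x
        = -∫ x in (0:ℝ)..Real.pi, Real.sin x * w x := by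
      rw [← intervalIntegral.integral_neg]
      congr 1; ext x; ring
    rw [this]; ring
  -- g is the nonlinear term, expressed via the ODE as a continuous function
  set g : ℝ → ℝ := fun x => -(deriv (deriv w) x) - β ^ 2 * w x with hg
  have hcontg : Continuous g := (hcontw''.neg).sub (continuous_const.mul hcontw)
  have hgpos : ∀ x ∈ Set.Ioo (0:ℝ) Real.pi, 0 < g x * Real.sin x := by
    intro x hx
    have hwx : 0 < w x := hpos x hx
    have hsx : 0 < Real.sin x := Real.sin_pos_of_pos_of_lt_pi hx.1 hx.2
    have habs : |w x| = w x := abs_of_pos hwx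
    have hgx : g x = c1 * w x * |w x| ^ (2 / β) + c2 * Real.sin x * |w x| ^ (1 + 3 / β) := by
      have := hode x hx
      simp only [hg]
      linarith
    have h1 : 0 ≤ c1 * w x * |w x| ^ (2 / β) := by
      have : (0:ℝ) < |w x| ^ (2 / β) := Real.rpow_pos_of_pos (abs_pos.mpr hwx.ne') _
      positivity
    have h2 : 0 ≤ c2 * Real.sin x * |w x| ^ (1 + 3 / β) := by
      have : (0:ℝ) < |w x| ^ (1 + 3 / β) := Real.rpow_pos_of_pos (abs_pos.mpr hwx.ne') _
      positivity
    have hgx0 : 0 < g x := by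
      rw [hgx]
      rcases lt_or_eq_of_le hc1 with h | h
      · have : (0:ℝ) < c1 * w x * |w x| ^ (2 / β) := by
          have := Real.rpow_pos_of_pos (abs_pos.mpr hwx.ne') (2 / β)
          positivity
        linarith
      · have hc2' : 0 < c2 := by linarith
        have : (0:ℝ) < c2 * Real.sin x * |w x| ^ (1 + 3 / β) := by
          have := Real.rpow_pos_of_pos (abs_pos.mpr hwx.ne') (1 + 3 / β)
          positivity
        linarith
    exact mul_pos hgx0 hsx
  have hJpos : 0 < ∫ x in (0:ℝ)..Real.pi, g x * Real.sin x :=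
    intervalIntegral.intervalIntegral_pos_of_pos_on
      ((hcontg.mul Real.continuous_sin).intervalIntegrable 0 Real.pi) hgpos Real.pi_pos
  have hIpos : 0 < ∫ x in (0:ℝ)..Real.pi, Real.sin x * w x :=
    intervalIntegral.intervalIntegral_pos_of_pos_on
      ((Real.continuous_sin.mul hcontw).intervalIntegrable 0 Real.pi)
      (fun x hx => mul_pos (Real.sin_pos_of_pos_of_lt_pi hx.1 hx.2) (hpos x hx)) Real.pi_pos
  -- Relate J to I: ∫ g sin = (1 - β²) ∫ sin w
  have hsplit : ∫ x in (0:ℝ)..Real.pi, g x * Real.sin x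
      = (1 - β ^ 2) * ∫ x in (0:ℝ)..Real.pi, Real.sin x * w x := by
    have heq : ∀ x, g x * Real.sin x
        = -(Real.sin x * deriv (deriv w) x) - β ^ 2 * (Real.sin x * w x) := by
      intro x; simp only [hg]; ring
    calc ∫ x in (0:ℝ)..Real.pi, g x * Real.sin x
        = ∫ x in (0:ℝ)..Real.pi,
            (-(Real.sin x * deriv (deriv w) x) - β ^ 2 * (Real.sin x * w x)) := by
          simp_rw [heq]
      _ = (∫ x in (0:ℝ)..Real.pi, -(Real.sin x * deriv (deriv w) x))
            - ∫ x in (0:ℝ)..Real.pi, β ^ 2 * (Real.sin x * w x) := by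
          apply intervalIntegral.integral_sub
          · exact ((Real.continuous_sin.mul hcontw'').neg).intervalIntegrable 0 Real.pi
          · exact (continuous_const.mul (Real.continuous_sin.mul hcontw)).intervalIntegrable 0 Real.pi
      _ = (1 - β ^ 2) * ∫ x in (0:ℝ)..Real.pi, Real.sin x * w x := by
          rw [intervalIntegral.integral_neg, key, intervalIntegral.integral_const_mul]
          ring
  have hβ2 : β ^ 2 < 1 := by
    by_contra h
    push_neg at h
    nlinarith [hsplit, hJpos, hIpos]
  exact (sq_lt_one_iff_abs_lt_one β).mp hβ2
end

section
/- Let $-2 < \beta < 0$, $c_1, c_2 \geq 0$ with $(c_1,c_2) \neq (0,0)$, and set $s = -1 - 2/\beta$, $s' = -1 - 3/\beta$. Then there exists a constant $a = a(\beta, c_1, c_2) > 0$ such that, with $\varphi(\phi) = \sin 2\phi$, the subsolution inequality $-(a\varphi)'' - \beta^2(a\varphi) \leq c_1 (a\varphi)^{-s} + c_2 \sin\phi\,(a\varphi)^{-s'}$ holds for all $\phi \in (0,\pi/2)$. -/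
open Real MeasureTheory Set

lemma deriv2_sin2 (a : ℝ) (φ : ℝ) :
    deriv (deriv (fun t => a * Real.sin (2*t))) φ = -(4*a*Real.sin (2*φ)) := by
  have h1 : (deriv fun t => a * Real.sin (2*t)) = fun t => (2*a) * Real.cos (2*t) := by
    funext t
    have h : HasDerivAt (fun t : ℝ => Real.sin (2*t)) (Real.cos (2*t) * 2) t := by
      simpa [Function.comp_def] using (Real.hasDerivAt_sin (2*t)).comp t ((hasDerivAt_id t).const_mul 2)
    have := (h.const_mul a).deriv
    rw [this]; ring
  rw [h1]
  have h : HasDerivAt (fun t : ℝ => Real.cos (2*t)) (-Real.sin (2*φ) * 2) φ := by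
    simpa [Function.comp_def] using (Real.hasDerivAt_cos (2*φ)).comp φ ((hasDerivAt_id φ).const_mul 2)
  have := (h.const_mul (2*a)).deriv
  rw [this]; ring

/-- Subsolution property: for `-2 < β < 0`, `c₁, c₂ ≥ 0` not both zero, with
`s = -1-2/β`, `s' = -1-3/β` and `φ ↦ sin 2φ`, there is `a > 0` with
`-(a sin 2φ)'' - β²(a sin 2φ) ≤ c₁ (a sin 2φ)^{-s} + c₂ sin φ (a sin 2φ)^{-s'}`
on `(0,π/2)`.  (Note `-s = 1 + 2/β` and `-s' = 1 + 3/β`.) -/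
theorem subsolution_exists (β c1 c2 : ℝ) (hβ1 : -2 < β) (hβ2 : β < 0)
    (hc1 : 0 ≤ c1) (hc2 : 0 ≤ c2) (hc : c1 ≠ 0 ∨ c2 ≠ 0) :
    ∃ a > (0:ℝ), ∀ φ ∈ Set.Ioo (0:ℝ) (Real.pi/2),
      -(deriv (deriv (fun t => a * Real.sin (2*t))) φ) - β ^ 2 * (a * Real.sin (2*φ))
        ≤ c1 * (a * Real.sin (2*φ)) ^ (1 + 2/β)
          + c2 * Real.sin φ * (a * Real.sin (2*φ)) ^ (1 + 3/β) := by
  have hβ0 : β ≠ 0 := ne_of_lt hβ2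
  set C : ℝ := 4 - β^2 with hC
  have hCpos : 0 < C := by nlinarith
  have hsin : ∀ φ ∈ Set.Ioo (0:ℝ) (Real.pi/2),
      0 < Real.sin (2*φ) ∧ Real.sin (2*φ) ≤ 1 ∧ Real.sin (2*φ) ≤ 2 * Real.sin φ := by
    intro φ hφ
    obtain ⟨h0, h1⟩ := hφ
    have hspos : 0 < Real.sin (2*φ) := Real.sin_pos_of_pos_of_lt_pi (by linarith)
      (by linarith)
    have hsφ : 0 ≤ Real.sin φ := Real.sin_nonneg_of_nonneg_of_le_pi (le_of_lt h0)
      (by linarith [Real.pi_pos])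
    refine ⟨hspos, Real.sin_le_one _, ?_⟩
    have : Real.sin (2*φ) = 2 * Real.sin φ * Real.cos φ := by
      rw [two_mul, Real.sin_add]; ring
    rw [this]
    nlinarith [Real.cos_le_one φ, hsφ]
  rcases hc with h1 | h2
  · -- use the c1 term
    have hc1pos : 0 < c1 := lt_of_le_of_ne hc1 (Ne.symm h1)
    refine ⟨(C/c1) ^ (β/2), Real.rpow_pos_of_pos (div_pos hCpos hc1pos) _, ?_⟩
    set a : ℝ := (C/c1) ^ (β/2) with ha
    have hapos : 0 < a := Real.rpow_pos_of_pos (div_pos hCpos hc1pos) _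
    have hakey : c1 * a ^ (2/β) = C := by
      rw [ha, ← Real.rpow_mul (le_of_lt (div_pos hCpos hc1pos))]
      have : β/2 * (2/β) = 1 := by field_simp
      rw [this, Real.rpow_one]
      field_simp
    intro φ hφ
    obtain ⟨hspos, hsle1, _⟩ := hsin φ hφ
    set s : ℝ := Real.sin (2*φ)
    rw [deriv2_sin2]
    have hxpos : 0 < a * s := mul_pos hapos hspos
    have hterm2 : 0 ≤ c2 * Real.sin φ * (a * s) ^ (1 + 3/β) := by
      have hsφ : 0 ≤ Real.sin φ := Real.sin_nonneg_of_nonneg_of_le_pi (le_of_lt hφ.1)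
        (by linarith [Real.pi_pos, hφ.2])
      positivity
    have hmain : C * (a * s) ≤ c1 * (a * s) ^ (1 + 2/β) := by
      have hrw : (a * s) ^ (1 + 2/β) = a ^ (1 + 2/β) * s ^ (1 + 2/β) :=
        Real.mul_rpow (le_of_lt hapos) (le_of_lt hspos)
      have hs1 : s ^ (1:ℝ) ≤ s ^ (1 + 2/β) :=
        Real.rpow_le_rpow_of_exponent_ge hspos hsle1 (by
          have : 2/β < 0 := div_neg_of_pos_of_neg two_pos hβ2
          linarith)
      rw [hrw]
      have har : a ^ (1 + 2/β) = a * a ^ (2/β) := by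
        rw [Real.rpow_add hapos, Real.rpow_one]
      rw [har]
      calc C * (a * s) = c1 * a ^ (2/β) * (a * s) := by rw [hakey]
        _ = c1 * (a * a ^ (2/β)) * s ^ (1:ℝ) := by rw [Real.rpow_one]; ring
        _ ≤ c1 * (a * a ^ (2/β)) * s ^ (1 + 2/β) := by
            apply mul_le_mul_of_nonneg_left hs1
            positivity
        _ = c1 * (a * a ^ (2/β) * s ^ (1 + 2/β)) := by ring
    nlinarith [hmain, hterm2]
  · -- use the c2 term
    have hc2pos : 0 < c2 := lt_of_le_of_ne hc2 (Ne.symm h2)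
    have hdpos : 0 < 2*C/c2 := by positivity
    refine ⟨(2*C/c2) ^ (β/3), Real.rpow_pos_of_pos hdpos _, ?_⟩
    set a : ℝ := (2*C/c2) ^ (β/3) with ha
    have hapos : 0 < a := Real.rpow_pos_of_pos hdpos _
    have hakey : c2 * a ^ (3/β) = 2*C := by
      rw [ha, ← Real.rpow_mul (le_of_lt hdpos)]
      have : β/3 * (3/β) = 1 := by field_simp
      rw [this, Real.rpow_one]
      field_simp
    intro φ hφ
    obtain ⟨hspos, hsle1, hs2⟩ := hsin φ hφ
    set s : ℝ := Real.sin (2*φ)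
    rw [deriv2_sin2]
    have hxpos : 0 < a * s := mul_pos hapos hspos
    have hterm1 : 0 ≤ c1 * (a * s) ^ (1 + 2/β) := by positivity
    have hqneg : 1 + 3/β ≤ 0 := by
      have h3 : 3/β ≤ -1 := by
        rw [div_le_iff_of_neg hβ2]; linarith
      linarith
    have hsφ : s/2 ≤ Real.sin φ := by linarith
    have hmain : C * (a * s) ≤ c2 * Real.sin φ * (a * s) ^ (1 + 3/β) := by
      have hpow : a ^ (1 + 3/β) ≤ (a * s) ^ (1 + 3/β) :=
        Real.rpow_le_rpow_of_nonpos hxpos (by nlinarith) hqneg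
      have har : a ^ (1 + 3/β) = a * a ^ (3/β) := by
        rw [Real.rpow_add hapos, Real.rpow_one]
      calc C * (a * s) = c2 * a ^ (3/β) * (s/2) * a := by
            rw [hakey]; ring
        _ = c2 * (s/2) * a ^ (1 + 3/β) := by rw [har]; ring
        _ ≤ c2 * (s/2) * (a * s) ^ (1 + 3/β) := by
            apply mul_le_mul_of_nonneg_left hpow
            positivity
        _ ≤ c2 * Real.sin φ * (a * s) ^ (1 + 3/β) := by
            apply mul_le_mul_of_nonneg_right ?_ (le_of_lt (Real.rpow_pos_of_pos hxpos _))
            exact mul_le_mul_of_nonneg_left hsφ (le_of_lt hc2pos)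
    nlinarith [hmain, hterm1]
end

section
/- Let $-2 < \beta < 0$, $c_1, c_2 \geq 0$, and let $\sigma$ satisfy $\beta^2/4 < \sigma \leq \min\{1, -2\beta/3\}$ with $\sigma \neq 1$. Set $s = -1-2/\beta$, $s' = -1-3/\beta$, and $\varphi(\phi) = \sin 2\phi$. Then there exists $b = b(\beta, c_1, c_2, \sigma) > 0$ such that the supersolution inequality $-(b\varphi^\sigma)'' - \beta^2 (b\varphi^\sigma) \geq c_1 (b\varphi^\sigma)^{-s} + c_2 \sin\phi\, (b\varphi^\sigma)^{-s'}$ holds for all $\phi \in (0,\pi/2)$. -/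
set_option maxHeartbeats 1000000

open Real MeasureTheory Set

lemma hda1 (b σ : ℝ) {t : ℝ} (ht : Real.sin (2*t) ≠ 0) :
    HasDerivAt (fun t => b * Real.sin (2*t) ^ σ)
      (b * ((Real.cos (2*t) * 2) * σ * Real.sin (2*t) ^ (σ-1))) t := by
  have h1 : HasDerivAt (fun t : ℝ => 2*t) 2 t := by
    simpa using (hasDerivAt_id t).const_mul 2
  have h2 : HasDerivAt (fun t : ℝ => Real.sin (2*t)) (Real.cos (2*t) * 2) t :=
    (Real.hasDerivAt_sin (2*t)).comp t h1
  exact (h2.rpow_const (Or.inl ht)).const_mul b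

lemma hda2 (b σ : ℝ) {t : ℝ} (ht : Real.sin (2*t) ≠ 0) :
    HasDerivAt (fun t => b * ((Real.cos (2*t) * 2) * σ * Real.sin (2*t) ^ (σ-1)))
      (b * (((-Real.sin (2*t) * 2) * 2 * σ) * Real.sin (2*t) ^ (σ-1)
        + (Real.cos (2*t) * 2 * σ) * ((Real.cos (2*t) * 2) * (σ-1) * Real.sin (2*t) ^ (σ-1-1)))) t := by
  have h1 : HasDerivAt (fun t : ℝ => 2*t) 2 t := by
    simpa using (hasDerivAt_id t).const_mul 2
  have h2 : HasDerivAt (fun t : ℝ => Real.sin (2*t)) (Real.cos (2*t) * 2) t :=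
    (Real.hasDerivAt_sin (2*t)).comp t h1
  have h3 : HasDerivAt (fun t : ℝ => Real.cos (2*t)) (-Real.sin (2*t) * 2) t :=
    (Real.hasDerivAt_cos (2*t)).comp t h1
  have h4 : HasDerivAt (fun t : ℝ => Real.cos (2*t) * 2 * σ) (-Real.sin (2*t) * 2 * 2 * σ) t :=
    (h3.mul_const 2).mul_const σ
  have h5 := h2.rpow_const (p := σ - 1) (Or.inl ht)
  have := (h4.mul h5).const_mul b
  exact this

/-- Supersolution property: for `-2 < β < 0`, `c₁, c₂ ≥ 0`, and
`β²/4 < σ ≤ min{1, -2β/3}` with `σ ≠ 1`, there is `b > 0` with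
`-(b(sin 2φ)^σ)'' - β² b(sin 2φ)^σ ≥ c₁ (b(sin 2φ)^σ)^{-s} + c₂ sin φ (b(sin 2φ)^σ)^{-s'}`
on `(0,π/2)`, where `s = -1-2/β`, `s' = -1-3/β` (so `-s = 1+2/β`, `-s' = 1+3/β`). -/
theorem supersolution_exists (β c1 c2 σ : ℝ) (hβ1 : -2 < β) (hβ2 : β < 0)
    (hc1 : 0 ≤ c1) (hc2 : 0 ≤ c2)
    (hσ1 : β ^ 2 / 4 < σ) (hσ2 : σ ≤ min 1 (-2*β/3)) (hσ3 : σ ≠ 1) :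
    ∃ b > (0:ℝ), ∀ φ ∈ Set.Ioo (0:ℝ) (Real.pi/2),
      -(deriv (deriv (fun t => b * Real.sin (2*t) ^ σ)) φ)
          - β ^ 2 * (b * Real.sin (2*φ) ^ σ)
        ≥ c1 * (b * Real.sin (2*φ) ^ σ) ^ (1 + 2/β)
          + c2 * Real.sin φ * (b * Real.sin (2*φ) ^ σ) ^ (1 + 3/β) := by
  have hβne : β ≠ 0 := ne_of_lt hβ2
  have hβsq : 0 < β^2 := by nlinarith
  have hσpos : 0 < σ := lt_trans (by linarith) hσ1
  have hσle1 : σ ≤ 1 := le_trans hσ2 (min_le_left _ _)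
  have hσlt1 : σ < 1 := lt_of_le_of_ne hσle1 hσ3
  have hσβ : 3*σ ≤ -2*β := by
    have := le_trans hσ2 (min_le_right _ _); linarith [this]
  have hσβ' : σ ≤ -β := by linarith
  set m : ℝ := min (4*σ*(1-σ)) (4*σ-β^2) with hm_def
  have hm : 0 < m := lt_min (by nlinarith) (by nlinarith)
  have hm1 : m ≤ 4*σ*(1-σ) := min_le_left _ _
  have hm2 : m ≤ 4*σ-β^2 := min_le_right _ _
  set e : ℝ := c1 + c2 + 1 with he_def
  have he : 0 < e := by positivity
  have hme : 0 < m/e := div_pos hm he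
  set X : ℝ := (m/e) ^ (β/2) with hX_def
  have hX : 0 < X := Real.rpow_pos_of_pos hme _
  refine ⟨max 1 X, lt_of_lt_of_le one_pos (le_max_left _ _), ?_⟩
  set b := max 1 X with hb_def
  have hb1 : (1:ℝ) ≤ b := le_max_left _ _
  have hb : 0 < b := lt_of_lt_of_le one_pos hb1
  have h2β : 2/β < 0 := div_neg_of_pos_of_neg two_pos hβ2
  have hbX : b ^ (2/β) ≤ m/e := by
    have h1 : b ^ (2/β) ≤ X ^ (2/β) :=
      Real.rpow_le_rpow_of_nonpos hX (le_max_right _ _) h2β.le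
    have h2 : X ^ (2/β) = m/e := by
      rw [hX_def, ← Real.rpow_mul hme.le]
      have : β/2 * (2/β) = 1 := by field_simp
      rw [this, Real.rpow_one]
    linarith
  have hb32 : b ^ (3/β) ≤ b ^ (2/β) := by
    apply Real.rpow_le_rpow_of_exponent_le hb1
    have h1β : 1/β < 0 := one_div_neg.mpr hβ2
    have h : 3/β - 2/β = 1/β := by ring
    linarith
  have hkey : c1 * b ^ (1+2/β) + c2 * b ^ (1+3/β) ≤ m * b := by
    have e1 : b ^ (1+2/β) = b * b^(2/β) := by
      rw [Real.rpow_add hb, Real.rpow_one]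
    have e2 : b ^ (1+3/β) = b * b^(3/β) := by
      rw [Real.rpow_add hb, Real.rpow_one]
    have h3 : c1 * b^(2/β) + c2 * b^(3/β) ≤ m := by
      have hc1' : c1 * b^(2/β) ≤ c1 * (m/e) := mul_le_mul_of_nonneg_left hbX hc1
      have hc2' : c2 * b^(3/β) ≤ c2 * (m/e) := mul_le_mul_of_nonneg_left (le_trans hb32 hbX) hc2
      have h4 : (c1+c2)/e ≤ 1 := by rw [div_le_one he]; linarith
      have h5 : (c1+c2) * (m/e) = ((c1+c2)/e) * m := by ring
      nlinarith
    calc c1 * b^(1+2/β) + c2 * b^(1+3/β) = (c1*b^(2/β) + c2*b^(3/β)) * b := by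
          rw [e1, e2]; ring
      _ ≤ m * b := mul_le_mul_of_nonneg_right h3 hb.le
  clear_value b X m e
  intro φ hφ
  have h2φpos : 0 < 2*φ := by linarith [hφ.1]
  have h2φlt : 2*φ < π := by linarith [hφ.2]
  have hu : 0 < Real.sin (2*φ) := Real.sin_pos_of_pos_of_lt_pi h2φpos h2φlt
  set u := Real.sin (2*φ) with hu_def
  set C := Real.cos (2*φ) with hC_def
  have hu1 : u ≤ 1 := Real.sin_le_one _
  have hC2 : C^2 = 1 - u^2 := by
    have := Real.sin_sq_add_cos_sq (2*φ); linarith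
  set P2 : ℝ := u ^ (σ-2) with hP2_def
  have hP2 : 0 < P2 := Real.rpow_pos_of_pos hu _
  have e211 : u ^ (σ-1-1) = P2 := by rw [hP2_def]; congr 1; ring
  have eP1' : u ^ (σ-1) = P2 * u := by
    rw [hP2_def, ← Real.rpow_add_one hu.ne' (σ-2)]; congr 1; ring
  have eP0 : u ^ σ = P2 * u * u := by
    have h : u ^ σ = u^(σ-1) * u := by
      rw [← Real.rpow_add_one hu.ne' (σ-1)]; congr 1; ring
    rw [h, eP1']
  have hev : deriv (fun t => b * Real.sin (2*t) ^ σ)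
      =ᶠ[nhds φ] (fun t => b * ((Real.cos (2*t) * 2) * σ * Real.sin (2*t) ^ (σ-1))) := by
    filter_upwards [isOpen_Ioo.mem_nhds hφ] with t ht
    have hs : 0 < Real.sin (2*t) :=
      Real.sin_pos_of_pos_of_lt_pi (by linarith [ht.1]) (by linarith [ht.2])
    exact (hda1 b σ hs.ne').deriv
  have hD : deriv (deriv (fun t => b * Real.sin (2*t) ^ σ)) φ
      = b * (((-u * 2) * 2 * σ) * u ^ (σ-1)
        + (C * 2 * σ) * ((C * 2) * (σ-1) * u ^ (σ-1-1))) := by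
    rw [hev.deriv_eq]
    exact (hda2 b σ hu.ne').deriv
  have hLHS : -(deriv (deriv (fun t => b * Real.sin (2*t) ^ σ)) φ) - β^2*(b * u^σ)
      ≥ m * (b * P2) := by
    have heq : -(b * (((-u * 2) * 2 * σ) * u ^ (σ-1)
          + (C * 2 * σ) * ((C * 2) * (σ-1) * u ^ (σ-1-1)))) - β^2*(b * u^σ)
        = (b*P2) * (4*σ*(1-σ)*(1-u*u) + (4*σ-β^2)*(u*u)) := by
      rw [e211, eP1', eP0]
      linear_combination (-(4*σ*(σ-1)*b*P2)) * hC2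
    rw [hD, heq]
    have huu1 : u*u ≤ 1 := mul_le_one₀ hu1 hu.le hu1
    have hK : m ≤ 4*σ*(1-σ)*(1-u*u) + (4*σ-β^2)*(u*u) := by
      have t1 : (0:ℝ) ≤ (4*σ*(1-σ)-m) * (1-u*u) :=
        mul_nonneg (by linarith) (by linarith)
      have t2 : (0:ℝ) ≤ (4*σ-β^2-m) * (u*u) :=
        mul_nonneg (by linarith) (mul_nonneg hu.le hu.le)
      linarith
    have := mul_le_mul_of_nonneg_left hK (mul_pos hb hP2).le
    linarith
  have hP0pos : 0 < u^σ := Real.rpow_pos_of_pos hu σ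
  have hBP0 : 0 < b * u^σ := mul_pos hb hP0pos
  have hr1 : (b * u^σ) ^ (1+2/β) ≤ b^(1+2/β) * P2 := by
    rw [Real.mul_rpow hb.le hP0pos.le, ← Real.rpow_mul hu.le, hP2_def]
    apply mul_le_mul_of_nonneg_left _ (Real.rpow_nonneg hb.le _)
    apply Real.rpow_le_rpow_of_exponent_ge hu hu1
    have hd : σ*(1+2/β) - (σ-2) = 2*(σ+β)/β := by field_simp; ring
    have hnum : 2*(σ+β) ≤ 0 := by linarith
    have h0 : 0 ≤ 2*(σ+β)/β := div_nonneg_iff.mpr (Or.inr ⟨hnum, hβ2.le⟩)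
    linarith
  have hr2 : (b * u^σ) ^ (1+3/β) ≤ b^(1+3/β) * P2 := by
    rw [Real.mul_rpow hb.le hP0pos.le, ← Real.rpow_mul hu.le, hP2_def]
    apply mul_le_mul_of_nonneg_left _ (Real.rpow_nonneg hb.le _)
    apply Real.rpow_le_rpow_of_exponent_ge hu hu1
    have hd : σ*(1+3/β) - (σ-2) = (3*σ+2*β)/β := by field_simp; ring
    have hnum : 3*σ+2*β ≤ 0 := by linarith
    have h0 : 0 ≤ (3*σ+2*β)/β := div_nonneg_iff.mpr (Or.inr ⟨hnum, hβ2.le⟩)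
    linarith
  rw [ge_iff_le]
  calc c1 * (b*u^σ)^(1+2/β) + c2 * Real.sin φ * (b*u^σ)^(1+3/β)
      ≤ c1 * (b^(1+2/β)*P2) + c2 * (b^(1+3/β)*P2) := by
        have hs1 : Real.sin φ ≤ 1 := Real.sin_le_one φ
        have hnn : (0:ℝ) ≤ (b*u^σ)^(1+3/β) := Real.rpow_nonneg hBP0.le _
        have h2a : c2 * Real.sin φ * (b*u^σ)^(1+3/β) ≤ c2 * (b*u^σ)^(1+3/β) := by
          have h2a' : c2 * Real.sin φ * (b*u^σ)^(1+3/β) ≤ c2 * 1 * (b*u^σ)^(1+3/β) :=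
            mul_le_mul_of_nonneg_right (mul_le_mul_of_nonneg_left hs1 hc2) hnn
          linarith [h2a']
        have h1 := mul_le_mul_of_nonneg_left hr1 hc1
        have h2 := mul_le_mul_of_nonneg_left hr2 hc2
        linarith
    _ = (c1*b^(1+2/β) + c2*b^(1+3/β)) * P2 := by ring
    _ ≤ (m*b)*P2 := mul_le_mul_of_nonneg_right hkey hP2.le
    _ = m*(b*P2) := by ring
    _ ≤ _ := hLHS
end

section
/- Uniqueness for the singular ODE: Let $-2 < \beta < 0$, $c_1, c_2 \geq 0$, $s = -1-2/\beta$, $s' = -1-3/\beta$. If $w_1, w_2 \in C^2(0,\pi/2) \cap C[0,\pi/2]$ are both positive on $(0,\pi/2)$, vanish at $0$ and $\pi/2$, and satisfy $-w_i'' = \beta^2 w_i + c_1 w_i^{-s} + c_2\sin\phi\,w_i^{-s'}$ on $(0,\pi/2)$, then $w_1 = w_2$. -/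
open Real MeasureTheory Set
open Filter Topology

theorem second_deriv_test_max {u : ℝ → ℝ} {a : ℝ} (h : IsLocalMax u a)
    (hu : ∀ᶠ x in 𝓝 a, DifferentiableAt ℝ u x)
    (hu2 : DifferentiableAt ℝ (deriv u) a) :
    deriv (deriv u) a ≤ 0 := by
  by_contra hL
  push_neg at hL
  have h0 : deriv u a = 0 := h.deriv_eq_zero
  have hD : HasDerivAt (deriv u) (deriv (deriv u) a) a := hu2.hasDerivAt
  have hslope := hasDerivAt_iff_tendsto_slope.1 hD
  have h1 : ∀ᶠ x in 𝓝[≠] a, 0 < slope (deriv u) a x :=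
    hslope.eventually (eventually_gt_nhds hL)
  have h2 : ∀ᶠ x in 𝓝[>] a, 0 < deriv u x := by
    have hmono : 𝓝[>] a ≤ 𝓝[≠] a :=
      nhdsWithin_mono a (fun x hx => ne_of_gt hx)
    filter_upwards [hmono h1, self_mem_nhdsWithin] with x hx hxa
    have hx' : 0 < (deriv u x - deriv u a) / (x - a) := by
      simpa [slope_def_field] using hx
    rw [h0, sub_zero] at hx'
    have hxa' : 0 < x - a := sub_pos.2 hxa
    have := mul_pos hx' hxa'
    rwa [div_mul_cancel₀ _ hxa'.ne'] at this
  obtain ⟨ε, hε, hball⟩ := Metric.eventually_nhds_iff.1 (hu.and h)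
  obtain ⟨b, hb, hIoo⟩ := mem_nhdsGT_iff_exists_Ioo_subset.1 h2
  set c := min b (a + ε / 2) with hc
  have hac : a < c := lt_min hb (by linarith)
  have hsub : ∀ x ∈ Icc a c, dist x a < ε := by
    intro x hx
    rw [Real.dist_eq, abs_lt]
    constructor
    · linarith [hx.1]
    · have : x ≤ a + ε / 2 := le_trans hx.2 (min_le_right _ _)
      linarith
  have hmono : StrictMonoOn u (Icc a c) := by
    apply strictMonoOn_of_deriv_pos (convex_Icc a c)
    · intro x hx
      exact ((hball (hsub x hx)).1.continuousAt).continuousWithinAt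
    · intro x hx
      rw [interior_Icc] at hx
      exact hIoo ⟨hx.1, lt_of_lt_of_le hx.2 (min_le_left _ _)⟩
  have h3 : u a < u c := hmono (left_mem_Icc.2 hac.le) (right_mem_Icc.2 hac.le) hac
  have h4 : u c ≤ u a := (hball (hsub c (right_mem_Icc.2 hac.le))).2
  linarith

set_option maxHeartbeats 1000000 in

theorem comp_le (β c1 c2 : ℝ) (hβ1 : -2 < β) (hβ2 : β < 0)
    (hc1 : 0 ≤ c1) (hc2 : 0 ≤ c2)
    (w1 w2 : ℝ → ℝ)
    (hw1c : ContinuousOn w1 (Set.Icc 0 (Real.pi/2)))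
    (hw2c : ContinuousOn w2 (Set.Icc 0 (Real.pi/2)))
    (hw1d : ∀ φ ∈ Set.Ioo (0:ℝ) (Real.pi/2), DifferentiableAt ℝ w1 φ)
    (hw1d2 : ∀ φ ∈ Set.Ioo (0:ℝ) (Real.pi/2), DifferentiableAt ℝ (deriv w1) φ)
    (hw2d : ∀ φ ∈ Set.Ioo (0:ℝ) (Real.pi/2), DifferentiableAt ℝ w2 φ)
    (hw2d2 : ∀ φ ∈ Set.Ioo (0:ℝ) (Real.pi/2), DifferentiableAt ℝ (deriv w2) φ)
    (hpos1 : ∀ φ ∈ Set.Ioo (0:ℝ) (Real.pi/2), 0 < w1 φ)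
    (hpos2 : ∀ φ ∈ Set.Ioo (0:ℝ) (Real.pi/2), 0 < w2 φ)
    (hode1 : ∀ φ ∈ Set.Ioo (0:ℝ) (Real.pi/2),
      -(deriv (deriv w1) φ) = β ^ 2 * w1 φ + c1 * w1 φ ^ (1 + 2/β)
        + c2 * Real.sin φ * w1 φ ^ (1 + 3/β))
    (hode2 : ∀ φ ∈ Set.Ioo (0:ℝ) (Real.pi/2),
      -(deriv (deriv w2) φ) = β ^ 2 * w2 φ + c1 * w2 φ ^ (1 + 2/β)
        + c2 * Real.sin φ * w2 φ ^ (1 + 3/β))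
    (hb10 : w1 0 = 0) (hb1π : w1 (Real.pi/2) = 0)
    (hb20 : w2 0 = 0) (hb2π : w2 (Real.pi/2) = 0) :
    ∀ φ ∈ Set.Icc (0:ℝ) (Real.pi/2), w1 φ ≤ w2 φ := by
  have hπ : (0:ℝ) < Real.pi / 2 := by positivity
  have hβsq : β ^ 2 < 4 := by nlinarith
  set γ := Real.sqrt ((β ^ 2 + 4) / 2) with hγdef
  have hγ0 : 0 ≤ γ := Real.sqrt_nonneg _
  have hγsq : γ ^ 2 = (β ^ 2 + 4) / 2 := Real.sq_sqrt (by nlinarith)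
  have hγlt2 : γ < 2 := by nlinarith
  have hβγ : β ^ 2 < γ ^ 2 := by nlinarith
  set ψ : ℝ → ℝ := fun φ => Real.cos (γ * (φ - Real.pi / 4)) with hψdef
  set ψ' : ℝ → ℝ := fun φ => -Real.sin (γ * (φ - Real.pi / 4)) * γ with hψ'def
  have hlin : ∀ φ : ℝ, HasDerivAt (fun φ : ℝ => γ * (φ - Real.pi / 4)) γ φ := by
    intro φ
    simpa using ((hasDerivAt_id φ).sub_const (Real.pi / 4)).const_mul γ
  have hψd : ∀ φ : ℝ, HasDerivAt ψ (ψ' φ) φ := fun φ =>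
    (Real.hasDerivAt_cos _).comp φ (hlin φ)
  have hψ'd : ∀ φ : ℝ, HasDerivAt ψ' (-(γ ^ 2) * ψ φ) φ := by
    intro φ
    have h2 := (((Real.hasDerivAt_sin (γ * (φ - Real.pi / 4))).comp φ (hlin φ)).neg).mul_const γ
    convert h2 using 1
    · rfl
    · rfl
    · rfl
    · simp only [hψdef]; ring
  have hψpos : ∀ φ ∈ Icc (0:ℝ) (Real.pi / 2), 0 < ψ φ := by
    intro φ hφ
    apply Real.cos_pos_of_mem_Ioo
    have hπ0 := Real.pi_pos
    have hlo : γ * (-(Real.pi / 4)) ≤ γ * (φ - Real.pi / 4) :=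
      mul_le_mul_of_nonneg_left (by linarith [hφ.1]) hγ0
    have hhi : γ * (φ - Real.pi / 4) ≤ γ * (Real.pi / 4) :=
      mul_le_mul_of_nonneg_left (by linarith [hφ.2]) hγ0
    have hγπ : γ * Real.pi < 2 * Real.pi := mul_lt_mul_of_pos_right hγlt2 hπ0
    constructor <;> nlinarith
  set v : ℝ → ℝ := fun φ => w1 φ - w2 φ with hvdef
  set u : ℝ → ℝ := fun φ => v φ / ψ φ with hudef
  have hψcont : Continuous ψ := Real.continuous_cos.comp (continuous_const.mul (continuous_id.sub continuous_const))
  have hucont : ContinuousOn u (Icc 0 (Real.pi / 2)) :=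
    (hw1c.sub hw2c).div hψcont.continuousOn (fun φ hφ => (hψpos φ hφ).ne')
  obtain ⟨φ₀, hφ₀, hmax⟩ := isCompact_Icc.exists_isMaxOn (nonempty_Icc.2 hπ.le) hucont
  by_cases hcase : u φ₀ ≤ 0
  · intro φ hφ
    have h1 : u φ ≤ u φ₀ := hmax hφ
    have hψφ := hψpos φ hφ
    have hv : v φ = u φ * ψ φ := (div_mul_cancel₀ _ hψφ.ne').symm
    have : v φ ≤ 0 := by
      rw [hv]; exact mul_nonpos_of_nonpos_of_nonneg (le_trans h1 hcase) hψφ.le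
    simp only [hvdef] at this; linarith
  · exfalso
    push_neg at hcase
    have hv0 : v 0 = 0 := by simp [hvdef, hb10, hb20]
    have hvπ : v (Real.pi / 2) = 0 := by simp [hvdef, hb1π, hb2π]
    have hu0 : u 0 = 0 := by simp [hudef, hv0]
    have huπ : u (Real.pi / 2) = 0 := by simp [hudef, hvπ]
    have hne0 : φ₀ ≠ 0 := by rintro rfl; rw [hu0] at hcase; exact lt_irrefl _ hcase
    have hneπ : φ₀ ≠ Real.pi / 2 := by rintro rfl; rw [huπ] at hcase; exact lt_irrefl _ hcase
    have hφ₀o : φ₀ ∈ Ioo (0:ℝ) (Real.pi / 2) :=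
      ⟨lt_of_le_of_ne hφ₀.1 (Ne.symm hne0), lt_of_le_of_ne hφ₀.2 hneπ⟩
    have hIoo_nhds : Ioo (0:ℝ) (Real.pi / 2) ∈ 𝓝 φ₀ := isOpen_Ioo.mem_nhds hφ₀o
    have hlocmax : IsLocalMax u φ₀ := hmax.isLocalMax (Icc_mem_nhds hφ₀o.1 hφ₀o.2)
    have hψne : ∀ φ ∈ Ioo (0:ℝ) (Real.pi / 2), ψ φ ≠ 0 :=
      fun φ hφ => (hψpos φ (Ioo_subset_Icc_self hφ)).ne'
    have hvdiff : ∀ φ ∈ Ioo (0:ℝ) (Real.pi / 2), DifferentiableAt ℝ v φ :=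
      fun φ hφ => (hw1d φ hφ).sub (hw2d φ hφ)
    have hψdiff : ∀ φ : ℝ, DifferentiableAt ℝ ψ φ := fun φ => (hψd φ).differentiableAt
    have hψ'diff : ∀ φ : ℝ, DifferentiableAt ℝ ψ' φ := fun φ => (hψ'd φ).differentiableAt
    have hudiff : ∀ φ ∈ Ioo (0:ℝ) (Real.pi / 2), DifferentiableAt ℝ u φ :=
      fun φ hφ => (hvdiff φ hφ).div (hψdiff φ) (hψne φ hφ)
    have huev : ∀ᶠ x in 𝓝 φ₀, DifferentiableAt ℝ u x := eventually_of_mem hIoo_nhds hudiff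
    have hderiv_u : ∀ φ ∈ Ioo (0:ℝ) (Real.pi / 2),
        deriv u φ = (deriv v φ * ψ φ - v φ * ψ' φ) / ψ φ ^ 2 := by
      intro φ hφ
      rw [hudef]
      rw [deriv_fun_div (hvdiff φ hφ) (hψdiff φ) (hψne φ hφ), (hψd φ).deriv]
    have hdvev : deriv v =ᶠ[𝓝 φ₀] fun φ => deriv w1 φ - deriv w2 φ :=
      eventually_of_mem hIoo_nhds (fun φ hφ => by
        rw [hvdef]; exact deriv_sub (hw1d φ hφ) (hw2d φ hφ))
    have hdvd : DifferentiableAt ℝ (deriv v) φ₀ :=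
      ((hw1d2 φ₀ hφ₀o).sub (hw2d2 φ₀ hφ₀o)).congr_of_eventuallyEq hdvev
    have hdud : DifferentiableAt ℝ (deriv u) φ₀ := by
      have hev : deriv u =ᶠ[𝓝 φ₀] fun φ => (deriv v φ * ψ φ - v φ * ψ' φ) / ψ φ ^ 2 :=
        eventually_of_mem hIoo_nhds hderiv_u
      have hformula : DifferentiableAt ℝ
          (fun φ => (deriv v φ * ψ φ - v φ * ψ' φ) / ψ φ ^ 2) φ₀ := by
        apply DifferentiableAt.div
        · exact (hdvd.mul (hψdiff φ₀)).sub ((hvdiff φ₀ hφ₀o).mul (hψ'diff φ₀))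
        · exact (hψdiff φ₀).pow 2
        · exact pow_ne_zero 2 (hψne φ₀ hφ₀o)
      exact hformula.congr_of_eventuallyEq hev
    have hu'0 : deriv u φ₀ = 0 := hlocmax.deriv_eq_zero
    have hu''le : deriv (deriv u) φ₀ ≤ 0 := second_deriv_test_max hlocmax huev hdud
    have hveq : ∀ φ ∈ Ioo (0:ℝ) (Real.pi / 2), v φ = u φ * ψ φ :=
      fun φ hφ => (div_mul_cancel₀ _ (hψne φ hφ)).symm
    have hderiv_v : ∀ φ ∈ Ioo (0:ℝ) (Real.pi / 2),
        deriv v φ = deriv u φ * ψ φ + u φ * ψ' φ := by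
      intro φ hφ
      have hev : v =ᶠ[𝓝 φ] fun x => u x * ψ x :=
        eventually_of_mem (isOpen_Ioo.mem_nhds hφ) hveq
      rw [hev.deriv_eq, deriv_fun_mul (hudiff φ hφ) (hψdiff φ), (hψd φ).deriv]
    have hvv : deriv (deriv v) φ₀ =
        deriv (deriv u) φ₀ * ψ φ₀ + deriv u φ₀ * ψ' φ₀
          + (deriv u φ₀ * ψ' φ₀ + u φ₀ * (-(γ ^ 2) * ψ φ₀)) := by
      have hev : deriv v =ᶠ[𝓝 φ₀] fun φ => deriv u φ * ψ φ + u φ * ψ' φ :=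
        eventually_of_mem hIoo_nhds hderiv_v
      rw [hev.deriv_eq,
        deriv_fun_add (f := fun φ => deriv u φ * ψ φ) (g := fun φ => u φ * ψ' φ) (hdud.mul (hψdiff φ₀)) ((hudiff φ₀ hφ₀o).mul (hψ'diff φ₀)),
        deriv_fun_mul hdud (hψdiff φ₀), deriv_fun_mul (hudiff φ₀ hφ₀o) (hψ'diff φ₀),
        (hψd φ₀).deriv, (hψ'd φ₀).deriv]
    have hψ0 := hψpos φ₀ (Ioo_subset_Icc_self hφ₀o)
    have hv₀pos : 0 < v φ₀ := by rw [hveq φ₀ hφ₀o]; exact mul_pos hcase hψ0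
    have key1 : γ ^ 2 * v φ₀ ≤ -(deriv (deriv v) φ₀) := by
      rw [hvv, hu'0, hveq φ₀ hφ₀o]
      nlinarith [mul_nonpos_of_nonpos_of_nonneg hu''le hψ0.le]
    have hvdd : deriv (deriv v) φ₀ = deriv (deriv w1) φ₀ - deriv (deriv w2) φ₀ := by
      rw [hdvev.deriv_eq, deriv_fun_sub (hw1d2 φ₀ hφ₀o) (hw2d2 φ₀ hφ₀o)]
    have h1 := hode1 φ₀ hφ₀o
    have h2 := hode2 φ₀ hφ₀o
    have hw21 : w2 φ₀ < w1 φ₀ := by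
      have := hv₀pos; rw [hvdef] at this; simpa [sub_pos] using this
    have hw2p := hpos2 φ₀ hφ₀o
    have hp : (1 + 2 / β) ≤ 0 := by
      have : 2 / β < -1 := by rw [div_lt_iff_of_neg hβ2]; linarith
      linarith
    have hq : (1 + 3 / β) ≤ 0 := by
      have : 3 / β < -1 := by rw [div_lt_iff_of_neg hβ2]; linarith
      linarith
    have hA : w1 φ₀ ^ (1 + 2 / β) ≤ w2 φ₀ ^ (1 + 2 / β) :=
      Real.rpow_le_rpow_of_nonpos hw2p hw21.le hp
    have hB : w1 φ₀ ^ (1 + 3 / β) ≤ w2 φ₀ ^ (1 + 3 / β) :=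
      Real.rpow_le_rpow_of_nonpos hw2p hw21.le hq
    have hsin : 0 ≤ Real.sin φ₀ :=
      Real.sin_nonneg_of_nonneg_of_le_pi hφ₀o.1.le (by linarith [hφ₀o.2, Real.pi_pos])
    have key2 : -(deriv (deriv v) φ₀) ≤ β ^ 2 * v φ₀ := by
      rw [hvdd, show v φ₀ = w1 φ₀ - w2 φ₀ from rfl]
      have hc1' : c1 * w1 φ₀ ^ (1 + 2 / β) ≤ c1 * w2 φ₀ ^ (1 + 2 / β) :=
        mul_le_mul_of_nonneg_left hA hc1
      have hc2' : c2 * Real.sin φ₀ * w1 φ₀ ^ (1 + 3 / β)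
          ≤ c2 * Real.sin φ₀ * w2 φ₀ ^ (1 + 3 / β) :=
        mul_le_mul_of_nonneg_left hB (mul_nonneg hc2 hsin)
      linarith
    nlinarith [key1, key2, hv₀pos, hβγ]

/-- Uniqueness for the singular ODE: for `-2 < β < 0`, `c₁, c₂ ≥ 0`,
`s = -1-2/β`, `s' = -1-3/β`, two positive solutions
`w ∈ C²(0,π/2) ∩ C[0,π/2]` of `-w'' = β²w + c₁ w^{-s} + c₂ sin φ w^{-s'}`
vanishing at the endpoints coincide.  (Note `-s = 1+2/β`, `-s' = 1+3/β`.) -/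
theorem uniqueness_singular_ode (β c1 c2 : ℝ) (hβ1 : -2 < β) (hβ2 : β < 0)
    (hc1 : 0 ≤ c1) (hc2 : 0 ≤ c2)
    (w1 w2 : ℝ → ℝ)
    (hw1c : ContinuousOn w1 (Set.Icc 0 (Real.pi/2)))
    (hw2c : ContinuousOn w2 (Set.Icc 0 (Real.pi/2)))
    (hw1d : ∀ φ ∈ Set.Ioo (0:ℝ) (Real.pi/2), DifferentiableAt ℝ w1 φ)
    (hw1d2 : ∀ φ ∈ Set.Ioo (0:ℝ) (Real.pi/2), DifferentiableAt ℝ (deriv w1) φ)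
    (hw2d : ∀ φ ∈ Set.Ioo (0:ℝ) (Real.pi/2), DifferentiableAt ℝ w2 φ)
    (hw2d2 : ∀ φ ∈ Set.Ioo (0:ℝ) (Real.pi/2), DifferentiableAt ℝ (deriv w2) φ)
    (hpos1 : ∀ φ ∈ Set.Ioo (0:ℝ) (Real.pi/2), 0 < w1 φ)
    (hpos2 : ∀ φ ∈ Set.Ioo (0:ℝ) (Real.pi/2), 0 < w2 φ)
    (hode1 : ∀ φ ∈ Set.Ioo (0:ℝ) (Real.pi/2),
      -(deriv (deriv w1) φ) = β ^ 2 * w1 φ + c1 * w1 φ ^ (1 + 2/β)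
        + c2 * Real.sin φ * w1 φ ^ (1 + 3/β))
    (hode2 : ∀ φ ∈ Set.Ioo (0:ℝ) (Real.pi/2),
      -(deriv (deriv w2) φ) = β ^ 2 * w2 φ + c1 * w2 φ ^ (1 + 2/β)
        + c2 * Real.sin φ * w2 φ ^ (1 + 3/β))
    (hb10 : w1 0 = 0) (hb1π : w1 (Real.pi/2) = 0)
    (hb20 : w2 0 = 0) (hb2π : w2 (Real.pi/2) = 0) :
    ∀ φ ∈ Set.Icc (0:ℝ) (Real.pi/2), w1 φ = w2 φ := by
  intro φ hφ
  refine le_antisymm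
    (comp_le β c1 c2 hβ1 hβ2 hc1 hc2 w1 w2 hw1c hw2c hw1d hw1d2 hw2d hw2d2 hpos1 hpos2
      hode1 hode2 hb10 hb1π hb20 hb2π φ hφ)
    (comp_le β c1 c2 hβ1 hβ2 hc1 hc2 w2 w1 hw2c hw1c hw2d hw2d2 hw1d hw1d2 hpos2 hpos1
      hode2 hode1 hb20 hb2π hb10 hb1π φ hφ)
end

section
/- Rigidity for $0 < \alpha < 1$ with zero density: Suppose $(a,f,\Pi) \in C^1[0,\pi]$ satisfy $(1-\alpha)f + a' = 0$ and $a\Pi' = 2\alpha f\Pi$ on $(0,\pi)$ with $a(0) = a(\pi) = 0$, where $0 < \alpha < 1$. Then $a\Pi \equiv 0$ on $[0,\pi]$. -/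
open Real MeasureTheory Set

/-- Rigidity for `0 < α < 1` with zero density: if `(a, f, Pbern)` are `C¹` on `[0,π]`,
satisfy `(1-α)f + a' = 0` and `aPbern' = 2α f Pbern` on `(0,π)`, and `a(0)=a(π)=0`,
then `aPbern ≡ 0` on `[0,π]`. -/
theorem rigidity_aPi_vanishes (α : ℝ) (hα0 : 0 < α) (hα1 : α < 1)
    (a f Pbern : ℝ → ℝ)
    (ha : ContDiff ℝ 1 a) (hf : ContDiff ℝ 1 f) (hPbern : ContDiff ℝ 1 Pbern)
    (h1 : ∀ φ ∈ Set.Ioo (0:ℝ) Real.pi, (1-α) * f φ + deriv a φ = 0)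
    (h2 : ∀ φ ∈ Set.Ioo (0:ℝ) Real.pi, a φ * deriv Pbern φ = 2*α * f φ * Pbern φ)
    (ha0 : a 0 = 0) (haπ : a Real.pi = 0) :
    ∀ φ ∈ Set.Icc (0:ℝ) Real.pi, a φ * Pbern φ = 0 := by
  intro φ hφ
  by_contra hne
  have h1α : (0:ℝ) < 1 - α := by linarith
  -- φ is interior
  have hφ0 : 0 < φ := by
    rcases lt_or_eq_of_le hφ.1 with h | h
    · exact h
    · exact absurd (by rw [← h, ha0, zero_mul]) hne
  have hφπ : φ < Real.pi := by
    rcases lt_or_eq_of_le hφ.2 with h | h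
    · exact h
    · exact absurd (by rw [h, haπ, zero_mul]) hne
  set β : ℝ := 2 * α / (1 - α) with hβdef
  have hβ : 0 < β := by positivity
  -- differentiability
  have haD : Differentiable ℝ a := ha.differentiable one_ne_zero
  have hPD : Differentiable ℝ Pbern := hPbern.differentiable one_ne_zero
  -- the set of zeros of a*Pbern below φ
  set S : Set ℝ := Set.Icc 0 φ ∩ {x | a x * Pbern x = 0} with hSdef
  have hScomp : IsCompact S :=
    isCompact_Icc.inter_right (isClosed_eq ((haD.continuous.mul hPD.continuous)) continuous_const)
  have hSne : S.Nonempty := ⟨0, ⟨le_refl 0, le_of_lt hφ0⟩, by simp [ha0]⟩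
  set c : ℝ := sSup S with hcdef
  have hcS : c ∈ S := hScomp.sSup_mem hSne
  have hc0 : 0 ≤ c := hcS.1.1
  have hcφ' : c ≤ φ := hcS.1.2
  have hcz : a c * Pbern c = 0 := hcS.2
  have hcφ : c < φ := lt_of_le_of_ne hcφ' (fun h => hne (h ▸ hcz))
  -- on (c, φ], a*Pbern ≠ 0
  have hnz : ∀ x ∈ Set.Ioc c φ, a x * Pbern x ≠ 0 := by
    intro x hx hx0
    have : x ∈ S := ⟨⟨le_trans hc0 (le_of_lt hx.1), hx.2⟩, hx0⟩
    exact absurd (le_csSup hScomp.bddAbove this) (not_le.mpr hx.1)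
  -- the conserved quantity g = Pbern * (a^2)^(β/2)
  set g : ℝ → ℝ := fun x => Pbern x * (a x ^ 2) ^ (β / 2) with hgdef
  have hgcont : Continuous g := by
    apply hPD.continuous.mul
    exact continuous_iff_continuousAt.mpr fun x =>
      ((haD.continuous.pow 2).continuousAt).rpow_const (Or.inr (by positivity))
  -- derivative vanishes on Ioc c φ
  have hderiv : ∀ x ∈ Set.Ioc c φ, HasDerivAt g 0 x := by
    intro x hx
    have hxIoo : x ∈ Set.Ioo 0 Real.pi :=
      ⟨lt_of_le_of_lt hc0 hx.1, lt_of_le_of_lt hx.2 hφπ⟩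
    have hax : a x ≠ 0 := fun h => hnz x hx (by rw [h, zero_mul])
    have hu : (0:ℝ) < a x ^ 2 := by positivity
    -- key algebraic identity
    have key : a x * deriv Pbern x + β * deriv a x * Pbern x = 0 := by
      have e1 := h1 x hxIoo
      have e2 := h2 x hxIoo
      have key' : (1 - α) * (a x * deriv Pbern x) + 2 * α * (deriv a x * Pbern x) = 0 := by
        linear_combination (1 - α) * e2 + 2 * α * Pbern x * e1
      rw [hβdef]
      field_simp
      linear_combination key'
    have hsq : HasDerivAt (fun y => a y ^ 2) (2 * a x * deriv a x) x := by
      have := ((haD x).hasDerivAt).pow 2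
      have h' : HasDerivAt (a ^ 2) (2 * a x * deriv a x) x := by
        simpa [mul_comm, mul_assoc, mul_left_comm] using this
      exact h'
    have hrp : HasDerivAt (fun t : ℝ => t ^ (β / 2))
        ((β / 2) * (a x ^ 2) ^ (β / 2 - 1)) (a x ^ 2) :=
      Real.hasDerivAt_rpow_const (Or.inl (ne_of_gt hu))
    have hcomp : HasDerivAt (fun y => (a y ^ 2) ^ (β / 2))
        ((β / 2) * (a x ^ 2) ^ (β / 2 - 1) * (2 * a x * deriv a x)) x :=
      (hrp.comp x hsq :)
    have hmul := ((hPD x).hasDerivAt).mul hcomp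
    have hE : (a x ^ 2) ^ (β / 2) = (a x ^ 2) ^ (β / 2 - 1) * (a x ^ 2) := by
      rw [← Real.rpow_add_one (ne_of_gt hu) (β / 2 - 1)]
      ring_nf
    have : deriv Pbern x * (a x ^ 2) ^ (β / 2)
        + Pbern x * ((β / 2) * (a x ^ 2) ^ (β / 2 - 1) * (2 * a x * deriv a x)) = 0 := by
      rw [hE]
      linear_combination (a x ^ 2) ^ (β / 2 - 1) * a x * key
    have h' : HasDerivAt (Pbern * fun y => (a y ^ 2) ^ (β / 2)) 0 x := by
      simpa [this] using hmul
    exact h'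
  -- g is constant equal to g φ on Ioc c φ
  have hconst : ∀ x ∈ Set.Ioc c φ, g x = g φ := by
    intro x hx
    have := constant_of_has_deriv_right_zero (f := g) (a := x) (b := φ)
      (hgcont.continuousOn)
      (fun y hy => (hderiv y ⟨lt_of_lt_of_le hx.1 hy.1, le_of_lt hy.2⟩).hasDerivWithinAt)
      φ ⟨hx.2, le_refl φ⟩
    exact this.symm
  -- take the limit x → c⁺ : g c = g φ
  have hgc : g c = g φ := by
    have h1' : Filter.Tendsto g (nhdsWithin c (Set.Ioc c φ)) (nhds (g c)) :=
      (hgcont.continuousAt).continuousWithinAt.tendsto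
    have h2' : Filter.Tendsto g (nhdsWithin c (Set.Ioc c φ)) (nhds (g φ)) := by
      apply Filter.Tendsto.congr' _ tendsto_const_nhds
      filter_upwards [self_mem_nhdsWithin] with y hy
      exact (hconst y hy).symm
    haveI hne' : (nhdsWithin c (Set.Ioc c φ)).NeBot := by
      rw [nhdsWithin_Ioc_eq_nhdsGT hcφ]
      exact nhdsGT_neBot c
    exact tendsto_nhds_unique h1' h2'
  -- but g c = 0 while g φ ≠ 0
  have hgc0 : g c = 0 := by
    rcases mul_eq_zero.mp hcz with h | h
    · simp [hgdef, h, Real.zero_rpow (by positivity : β / 2 ≠ 0)]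
    · simp [hgdef, h]
  have hgφ : g φ ≠ 0 := by
    have haφ : a φ ≠ 0 := fun h => hne (by rw [h, zero_mul])
    have hPφ : Pbern φ ≠ 0 := fun h => hne (by rw [h, mul_zero])
    have : (0:ℝ) < (a φ ^ 2) ^ (β / 2) := Real.rpow_pos_of_pos (by positivity) _
    exact mul_ne_zero hPφ (ne_of_gt this)
  exact hgφ (hgc0 ▸ hgc.symm)
end

section
/- Scale-invariant Boussinesq rigidity ($\alpha = 1$): Suppose $f, \Pi, \rho \in C^1[0,\pi]$ satisfy $2\Pi = 3\sin\phi\,\rho$ and $-ff' + \Pi' = \sin\phi\,\rho'$ on $(0,\pi)$, together with the first-integral conditions $f\rho = 0$ and $f\Pi = 0$ on $(0,\pi)$, and the boundary conditions $\rho(0) = \rho(\pi) = 0$. Then $\rho \equiv 0$, $\Pi \equiv 0$, and $f$ is constant. -/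
open Real MeasureTheory Set

/-- Extension by continuity from `(0,π)` to `[0,π]`. -/
lemma ext_closure_aux (h : ℝ → ℝ) (hc : Continuous h) (c : ℝ)
    (hh : ∀ x ∈ Set.Ioo (0:ℝ) Real.pi, h x = c) :
    ∀ x ∈ Set.Icc (0:ℝ) Real.pi, h x = c := by
  intro x hx
  have hsub : Set.Icc (0:ℝ) Real.pi ⊆ {y | h y = c} := by
    rw [← closure_Ioo (ne_of_lt Real.pi_pos)]
    exact closure_minimal (fun y hy => hh y hy) (isClosed_eq hc continuous_const)
  exact hsub hx

/-- If `f` is differentiable with vanishing derivative wherever it is nonzero on `(0,π)`,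
then nonvanishing propagates to the right within `(0,π)`. -/
lemma key_aux (f : ℝ → ℝ) (hd : Differentiable ℝ f)
    (h : ∀ x ∈ Set.Ioo (0:ℝ) Real.pi, f x ≠ 0 → deriv f x = 0)
    {a b : ℝ} (ha : a ∈ Set.Ioo (0:ℝ) Real.pi) (hb : b ∈ Set.Ioo (0:ℝ) Real.pi)
    (hab : a < b) (hfa : f a ≠ 0) : f b ≠ 0 := by
  intro hfb
  set S := Set.Icc a b ∩ f ⁻¹' {0} with hS
  have hSc : IsClosed S := isClosed_Icc.inter (isClosed_singleton.preimage hd.continuous)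
  have hSne : S.Nonempty := ⟨b, ⟨hab.le, le_refl b⟩, hfb⟩
  have hBdd : BddBelow S := ⟨a, fun x hx => hx.1.1⟩
  set c := sInf S with hc
  have hcS : c ∈ S := hSc.csInf_mem hSne hBdd
  have hfc : f c = 0 := hcS.2
  have hac : a < c := by
    rcases lt_or_eq_of_le hcS.1.1 with h' | h'
    · exact h'
    · exact absurd (h' ▸ hfc) hfa
  have hne : ∀ x ∈ Set.Ico a c, f x ≠ 0 := by
    intro x hx hx0
    exact absurd (csInf_le hBdd ⟨⟨hx.1, hx.2.le.trans hcS.1.2⟩, hx0⟩) (not_le_of_gt hx.2)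
  have hconst : ∀ x ∈ Set.Icc a c, f x = f a := by
    apply constant_of_has_deriv_right_zero hd.continuous.continuousOn
    intro x hx
    have hx0 : deriv f x = 0 :=
      h x ⟨lt_of_lt_of_le ha.1 hx.1, lt_of_lt_of_le hx.2 (hcS.1.2.trans hb.2.le)⟩ (hne x hx)
    exact (hx0 ▸ (hd x).hasDerivAt).hasDerivWithinAt
  exact hfa ((hconst c ⟨hac.le, le_refl c⟩) ▸ hfc)

/-- Scale-invariant Boussinesq rigidity (`α = 1`): if `f, Pbern, ρ` are `C¹` on `[0,π]`
and satisfy `2Pbern = 3 sin φ ρ`, `-ff' + Pbern' = sin φ ρ'`, `fρ = 0`, `fPbern = 0` on `(0,π)`,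
with `ρ(0) = ρ(π) = 0`, then `ρ ≡ 0`, `Pbern ≡ 0`, and `f` is constant. -/
theorem scale_invariant_rigidity (f Pbern ρ : ℝ → ℝ)
    (hf : ContDiff ℝ 1 f) (hPbern : ContDiff ℝ 1 Pbern) (hρ : ContDiff ℝ 1 ρ)
    (h1 : ∀ φ ∈ Set.Ioo (0:ℝ) Real.pi, 2 * Pbern φ = 3 * Real.sin φ * ρ φ)
    (h2 : ∀ φ ∈ Set.Ioo (0:ℝ) Real.pi,
      -(f φ * deriv f φ) + deriv Pbern φ = Real.sin φ * deriv ρ φ)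
    (h3 : ∀ φ ∈ Set.Ioo (0:ℝ) Real.pi, f φ * ρ φ = 0)
    (h4 : ∀ φ ∈ Set.Ioo (0:ℝ) Real.pi, f φ * Pbern φ = 0)
    (hρ0 : ρ 0 = 0) (hρπ : ρ Real.pi = 0) :
    (∀ φ ∈ Set.Icc (0:ℝ) Real.pi, ρ φ = 0) ∧
    (∀ φ ∈ Set.Icc (0:ℝ) Real.pi, Pbern φ = 0) ∧
    (∃ C : ℝ, ∀ φ ∈ Set.Icc (0:ℝ) Real.pi, f φ = C) := by
  have hfd : Differentiable ℝ f := hf.differentiable one_ne_zero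
  have hPd : Differentiable ℝ Pbern := hPbern.differentiable one_ne_zero
  have hρd : Differentiable ℝ ρ := hρ.differentiable one_ne_zero
  -- Lemma A: at points of (0,π) where f ≠ 0, all of ρ, Pbern, deriv f vanish
  have lemA : ∀ φ ∈ Set.Ioo (0:ℝ) Real.pi, f φ ≠ 0 →
      ρ φ = 0 ∧ Pbern φ = 0 ∧ deriv f φ = 0 := by
    intro φ hφ hfφ
    have hρφ : ρ φ = 0 := (mul_eq_zero.mp (h3 φ hφ)).resolve_left hfφ
    have hPφ : Pbern φ = 0 := (mul_eq_zero.mp (h4 φ hφ)).resolve_left hfφ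
    refine ⟨hρφ, hPφ, ?_⟩
    -- ρ and Pbern vanish on a neighborhood of φ
    have hopen : IsOpen (Set.Ioo (0:ℝ) Real.pi ∩ f ⁻¹' {0}ᶜ) :=
      isOpen_Ioo.inter (isOpen_compl_singleton.preimage hfd.continuous)
    have hmem : Set.Ioo (0:ℝ) Real.pi ∩ f ⁻¹' {0}ᶜ ∈ nhds φ :=
      hopen.mem_nhds ⟨hφ, hfφ⟩
    have hρ0' : ρ =ᶠ[nhds φ] (fun _ => (0:ℝ)) := by
      filter_upwards [hmem] with x hx
      exact (mul_eq_zero.mp (h3 x hx.1)).resolve_left hx.2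
    have hP0' : Pbern =ᶠ[nhds φ] (fun _ => (0:ℝ)) := by
      filter_upwards [hmem] with x hx
      exact (mul_eq_zero.mp (h4 x hx.1)).resolve_left hx.2
    have hdρ : deriv ρ φ = 0 := by
      rw [hρ0'.deriv_eq]; simp
    have hdP : deriv Pbern φ = 0 := by
      rw [hP0'.deriv_eq]; simp
    have := h2 φ hφ
    rw [hdρ, hdP] at this
    have hffd : f φ * deriv f φ = 0 := by linarith
    rcases mul_eq_zero.mp hffd with h' | h'
    · exact absurd h' hfφ
    · exact h'
  by_cases hall : ∀ x ∈ Set.Ioo (0:ℝ) Real.pi, f x = 0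
  · -- f ≡ 0 case: (ρ sin³)' = 0
    have hrel : ∀ φ ∈ Set.Ioo (0:ℝ) Real.pi,
        3 * Real.cos φ * ρ φ + Real.sin φ * deriv ρ φ = 0 := by
      intro φ hφ
      have hmem : Set.Ioo (0:ℝ) Real.pi ∈ nhds φ := isOpen_Ioo.mem_nhds hφ
      have hE : (fun x => 2 * Pbern x) =ᶠ[nhds φ] (fun x => 3 * Real.sin x * ρ x) := by
        filter_upwards [hmem] with x hx; exact h1 x hx
      have hd := hE.deriv_eq
      have hL : deriv (fun x => 2 * Pbern x) φ = 2 * deriv Pbern φ :=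
        deriv_const_mul 2 (hPd φ)
      have hR : HasDerivAt (fun x => 3 * Real.sin x * ρ x)
          (3 * Real.cos φ * ρ φ + 3 * Real.sin φ * deriv ρ φ) φ := by
        have := (((Real.hasDerivAt_sin φ).const_mul 3).fun_mul (hρd φ).hasDerivAt)
        convert this using 1
      rw [hL, hR.deriv] at hd
      have hdP : deriv Pbern φ = Real.sin φ * deriv ρ φ := by
        have h2' := h2 φ hφ
        rw [hall φ hφ] at h2'
        linarith
      rw [hdP] at hd
      linarith
    set g : ℝ → ℝ := fun x => ρ x * Real.sin x ^ 3 with hg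
    have hgd : ∀ x, HasDerivAt g
        (deriv ρ x * Real.sin x ^ 3 + ρ x * (3 * Real.sin x ^ 2 * Real.cos x)) x := by
      intro x
      have hs : HasDerivAt (fun y => Real.sin y ^ 3)
          (3 * Real.sin x ^ 2 * Real.cos x) x := by
        have := (Real.hasDerivAt_sin x).fun_pow 3
        simpa using this
      exact (hρd x).hasDerivAt.mul hs
    have hgzero : ∀ x ∈ Set.Icc (0:ℝ) Real.pi, g x = g 0 := by
      apply constant_of_has_deriv_right_zero
        ((hρd.continuous.mul (Real.continuous_sin.pow 3)).continuousOn)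
      intro x hx
      have hval : deriv ρ x * Real.sin x ^ 3 + ρ x * (3 * Real.sin x ^ 2 * Real.cos x) = 0 := by
        rcases eq_or_lt_of_le hx.1 with h' | h'
        · rw [← h']; simp
        · have := hrel x ⟨h', hx.2⟩
          nlinarith [this]
      exact (hval ▸ hgd x).hasDerivWithinAt
    have hg0 : g 0 = 0 := by simp [hg]
    have hρzero : ∀ x ∈ Set.Ioo (0:ℝ) Real.pi, ρ x = 0 := by
      intro x hx
      have hsin : Real.sin x > 0 := Real.sin_pos_of_pos_of_lt_pi hx.1 hx.2
      have := hgzero x ⟨hx.1.le, hx.2.le⟩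
      rw [hg0] at this
      have : ρ x * Real.sin x ^ 3 = 0 := this
      rcases mul_eq_zero.mp this with h' | h'
      · exact h'
      · exact absurd h' (by positivity)
    have hPzero : ∀ x ∈ Set.Ioo (0:ℝ) Real.pi, Pbern x = 0 := by
      intro x hx
      have := h1 x hx
      rw [hρzero x hx] at this
      linarith
    refine ⟨ext_closure_aux ρ hρd.continuous 0 hρzero,
            ext_closure_aux Pbern hPd.continuous 0 hPzero,
            ⟨0, ext_closure_aux f hfd.continuous 0 hall⟩⟩
  · -- f ≠ 0 somewhere, hence everywhere on (0,π)
    push_neg at hall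
    obtain ⟨a, ha, hfa⟩ := hall
    have hder : ∀ x ∈ Set.Ioo (0:ℝ) Real.pi, f x ≠ 0 → deriv f x = 0 :=
      fun x hx hfx => (lemA x hx hfx).2.2
    have hfne : ∀ x ∈ Set.Ioo (0:ℝ) Real.pi, f x ≠ 0 := by
      intro x hx
      rcases lt_trichotomy a x with h' | h' | h'
      · exact key_aux f hfd hder ha hx h' hfa
      · exact h' ▸ hfa
      · -- use reflection x ↦ f (π - x)
        set F : ℝ → ℝ := fun y => f (Real.pi - y) with hF
        have hFd : Differentiable ℝ F :=
          hfd.comp ((differentiable_const Real.pi).sub differentiable_id)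
        have hFder : ∀ y ∈ Set.Ioo (0:ℝ) Real.pi, F y ≠ 0 → deriv F y = 0 := by
          intro y hy hFy
          have hy' : Real.pi - y ∈ Set.Ioo (0:ℝ) Real.pi :=
            ⟨by linarith [hy.2], by linarith [hy.1]⟩
          have : deriv F y = -deriv f (Real.pi - y) := deriv_comp_const_sub f Real.pi y
          rw [this, hder _ hy' hFy]; ring
        have ha' : Real.pi - a ∈ Set.Ioo (0:ℝ) Real.pi := ⟨by linarith [ha.2], by linarith [ha.1]⟩
        have hx' : Real.pi - x ∈ Set.Ioo (0:ℝ) Real.pi := ⟨by linarith [hx.2], by linarith [hx.1]⟩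
        have hFa : F (Real.pi - a) ≠ 0 := by
          simp only [hF]; rw [show Real.pi - (Real.pi - a) = a by ring]; exact hfa
        have := key_aux F hFd hFder ha' hx' (by linarith) hFa
        simp only [hF] at this
        rwa [show Real.pi - (Real.pi - x) = x by ring] at this
    have hρzero : ∀ x ∈ Set.Ioo (0:ℝ) Real.pi, ρ x = 0 :=
      fun x hx => (lemA x hx (hfne x hx)).1
    have hPzero : ∀ x ∈ Set.Ioo (0:ℝ) Real.pi, Pbern x = 0 :=
      fun x hx => (lemA x hx (hfne x hx)).2.1
    have hfconst : ∀ x ∈ Set.Ioo (0:ℝ) Real.pi, f x = f a := by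
      have hmono : ∀ u v : ℝ, u ∈ Set.Ioo (0:ℝ) Real.pi → v ∈ Set.Ioo (0:ℝ) Real.pi →
          u ≤ v → f v = f u := by
        intro u v hu hv huv
        have := constant_of_has_deriv_right_zero (f := f) (a := u) (b := v)
          hfd.continuous.continuousOn ?_ v ⟨huv, le_refl v⟩
        · exact this
        · intro y hy
          have hy' : y ∈ Set.Ioo (0:ℝ) Real.pi :=
            ⟨lt_of_lt_of_le hu.1 hy.1, hy.2.trans hv.2⟩
          have h0 : deriv f y = 0 := hder y hy' (hfne y hy')
          exact (h0 ▸ (hfd y).hasDerivAt).hasDerivWithinAt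
      intro x hx
      rcases le_total x a with h' | h'
      · exact (hmono x a hx ha h').symm
      · exact hmono a x ha hx h'
    exact ⟨ext_closure_aux ρ hρd.continuous 0 hρzero,
           ext_closure_aux Pbern hPd.continuous 0 hPzero,
           ⟨f a, ext_closure_aux f hfd.continuous (f a) hfconst⟩⟩
end

section
/- A priori sandwich bound: Let $-2 < \beta < 0$, $c_1, c_2 \geq 0$ with $(c_1,c_2)\neq(0,0)$, $s = -1-2/\beta$, $s' = -1-3/\beta$, and let $\sigma \neq 1$ satisfy $\beta^2/4 < \sigma \leq \min\{1, -2\beta/3\}$. Then there exist constants $a, b > 0$, depending only on $\beta, c_1, c_2, \sigma$ (not on $w$), such that every positive solution $w \in C^2(0,\pi/2)\cap C[0,\pi/2]$ of $-w'' = \beta^2 w + c_1 w^{-s} + c_2\sin\phi\,w^{-s'}$ on $(0,\pi/2)$ with $w(0) = w(\pi/2) = 0$ satisfies $a\sin 2\phi \leq w(\phi) \leq b(\sin 2\phi)^\sigma$ for all $\phi \in (0,\pi/2)$. -/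
open Real MeasureTheory Set


lemma deriv2_nonneg_of_isLocalMin {f : ℝ → ℝ} {x : ℝ}
    (hd : ∀ᶠ y in nhds x, DifferentiableAt ℝ f y)
    (hd2 : DifferentiableAt ℝ (deriv f) x)
    (hmin : IsLocalMin f x) : 0 ≤ deriv (deriv f) x := by
  by_contra hneg
  push_neg at hneg
  set c := deriv (deriv f) x with hc
  have h0 : deriv f x = 0 := hmin.deriv_eq_zero
  have hslope : Filter.Tendsto (slope (deriv f) x) (nhdsWithin x {x}ᶜ) (nhds c) :=
    hasDerivAt_iff_tendsto_slope.1 hd2.hasDerivAt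
  have hmono : nhdsWithin x (Set.Ioi x) ≤ nhdsWithin x {x}ᶜ :=
    nhdsWithin_mono x (fun y hy => ne_of_gt hy)
  have hev : ∀ᶠ y in nhdsWithin x (Set.Ioi x), slope (deriv f) x y < c/2 :=
    Filter.Tendsto.eventually_lt_const (by linarith) (hslope.mono_left hmono)
  have hev2 : ∀ᶠ y in nhdsWithin x (Set.Ioi x), deriv f y < 0 := by
    filter_upwards [hev, self_mem_nhdsWithin] with y hy hy'
    have hyx : (0:ℝ) < y - x := sub_pos.2 hy'
    rw [slope_def_field, h0, sub_zero] at hy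
    have : deriv f y < c/2 * (y - x) := by
      rwa [div_lt_iff₀ hyx] at hy
    nlinarith
  obtain ⟨u, hu, hIoo⟩ := mem_nhdsGT_iff_exists_Ioo_subset.1 hev2
  obtain ⟨ε, hε, hball⟩ := Metric.eventually_nhds_iff.1 (hd.and hmin)
  set t := min u (x + ε/2) with ht
  have hxt : x < t := lt_min hu (by linarith)
  have hsub : ∀ y ∈ Icc x t, DifferentiableAt ℝ f y ∧ f x ≤ f y := by
    intro y hy
    apply hball
    rw [Real.dist_eq, abs_of_nonneg (by linarith [hy.1])]
    have : y ≤ x + ε/2 := le_trans hy.2 (min_le_right _ _)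
    linarith
  have hanti : StrictAntiOn f (Icc x t) := by
    apply strictAntiOn_of_deriv_neg (convex_Icc _ _)
    · exact fun y hy => ((hsub y hy).1).continuousAt.continuousWithinAt
    · intro y hy
      rw [interior_Icc] at hy
      exact hIoo ⟨hy.1, lt_of_lt_of_le hy.2 (min_le_left _ _)⟩
  have h1 : f t < f x := hanti (left_mem_Icc.2 hxt.le) (right_mem_Icc.2 hxt.le) hxt
  have h2 : f x ≤ f t := (hsub t (right_mem_Icc.2 hxt.le)).2
  linarith



lemma maxPrinciple {β : ℝ} (hβ : β^2 < 4) {d : ℝ → ℝ}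
    (hcont : ContinuousOn d (Icc 0 (π/2)))
    (hd1 : ∀ φ ∈ Ioo (0:ℝ) (π/2), DifferentiableAt ℝ d φ)
    (hd2 : ∀ φ ∈ Ioo (0:ℝ) (π/2), DifferentiableAt ℝ (deriv d) φ)
    (hineq : ∀ φ ∈ Ioo (0:ℝ) (π/2), d φ < 0 → β^2 * d φ ≤ -(deriv (deriv d) φ))
    (h0 : 0 ≤ d 0) (hpi : 0 ≤ d (π/2)) :
    ∀ φ ∈ Icc (0:ℝ) (π/2), 0 ≤ d φ := by
  have hπ : (0:ℝ) < π := Real.pi_pos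
  have hβnn : (0:ℝ) ≤ β^2 := sq_nonneg β
  set γ := Real.sqrt ((β^2+4)/2) with hγdef
  have hγsq : γ^2 = (β^2+4)/2 := Real.sq_sqrt (by positivity)
  have hγ1 : β^2 < γ^2 := by rw [hγsq]; linarith
  have hγ2 : γ^2 < 4 := by rw [hγsq]; linarith
  have hγpos : 0 < γ := Real.sqrt_pos.2 (by positivity)
  have hγlt2 : γ < 2 := by nlinarith
  set h := fun y : ℝ => Real.cos (γ*(y - π/4)) with hhdef
  have hhpos : ∀ y ∈ Icc (0:ℝ) (π/2), 0 < h y := by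
    intro y hy
    apply Real.cos_pos_of_mem_Ioo
    have h1 : |y - π/4| ≤ π/4 := abs_le.2 ⟨by linarith [hy.1], by linarith [hy.2]⟩
    have h2 : |γ*(y-π/4)| < π/2 := by
      rw [abs_mul, abs_of_pos hγpos]
      calc γ*|y-π/4| ≤ γ*(π/4) := by nlinarith
      _ < 2*(π/4) := by nlinarith
      _ = π/2 := by ring
    exact ⟨by linarith [(abs_lt.1 h2).1], (abs_lt.1 h2).2⟩
  set h1f := fun y : ℝ => -γ * Real.sin (γ*(y-π/4)) with h1fdef
  have hlin : ∀ y : ℝ, HasDerivAt (fun t : ℝ => γ*(t - π/4)) γ y := by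
    intro y
    simpa using ((hasDerivAt_id y).sub_const (π/4)).const_mul γ
  have hder1 : ∀ y, HasDerivAt h (h1f y) y := by
    intro y
    have := (Real.hasDerivAt_sin (γ*(y-π/4))).comp y (hlin y)
    have h2 := this.neg
    refine ((Real.hasDerivAt_cos (γ*(y-π/4))).comp y (hlin y)).congr_deriv ?_
    simp only [h1fdef]
    ring
  have hder2 : ∀ y, HasDerivAt h1f (-(γ^2) * h y) y := by
    intro y
    have := ((Real.hasDerivAt_sin (γ*(y-π/4))).comp y (hlin y)).const_mul (-γ)
    refine this.congr_deriv ?_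
    simp only [hhdef]
    ring
  have hcontH : ContinuousOn h (Icc 0 (π/2)) :=
    fun y _ => (hder1 y).differentiableAt.continuousAt.continuousWithinAt
  have hρcont : ContinuousOn (fun y => d y / h y) (Icc 0 (π/2)) :=
    hcont.div hcontH (fun y hy => (hhpos y hy).ne')
  obtain ⟨z, hz, hzmin⟩ := isCompact_Icc.exists_isMinOn (nonempty_Icc.2 (by linarith)) hρcont
  intro φ hφ
  by_contra hcon
  push_neg at hcon
  have hρφ : d φ / h φ < 0 := div_neg_of_neg_of_pos hcon (hhpos φ hφ)
  have hρz : d z / h z < 0 := lt_of_le_of_lt (hzmin hφ) hρφ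
  have hhz := hhpos z hz
  have hdz : d z < 0 := by
    rcases div_neg_iff.1 hρz with ⟨_, h2⟩ | ⟨h1, _⟩
    · linarith
    · exact h1
  have hz0 : z ≠ 0 := fun e => by rw [e] at hdz; linarith
  have hzpi : z ≠ π/2 := fun e => by rw [e] at hdz; linarith
  have hzIoo : z ∈ Ioo (0:ℝ) (π/2) :=
    ⟨lt_of_le_of_ne hz.1 (Ne.symm hz0), lt_of_le_of_ne hz.2 hzpi⟩
  set θ := -(d z / h z) with hθdef
  have hθpos : 0 < θ := by simp [hθdef]; linarith
  set q := fun y => d y + θ * h y with hqdef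
  have hdz_eq : d z = -θ * h z := by
    rw [hθdef, neg_neg, div_mul_cancel₀ _ hhz.ne']
  have hq0 : q z = 0 := by
    simp only [hqdef]
    rw [hdz_eq]; ring
  have hmemIcc : Icc (0:ℝ) (π/2) ∈ nhds z := Icc_mem_nhds hzIoo.1 hzIoo.2
  have hqmin : IsLocalMin q z := by
    refine Filter.eventually_of_mem hmemIcc (fun y hy => ?_)
    rw [hq0]
    have hyh := hhpos y hy
    have hle : d z / h z ≤ d y / h y := hzmin hy
    have : -θ * h y ≤ d y := by
      rw [hθdef, neg_neg]
      calc d z / h z * h y ≤ d y / h y * h y :=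
        mul_le_mul_of_nonneg_right hle hyh.le
      _ = d y := div_mul_cancel₀ _ hyh.ne'
    simp only [hqdef]
    linarith
  have hIooMem : Ioo (0:ℝ) (π/2) ∈ nhds z := isOpen_Ioo.mem_nhds hzIoo
  have hqd : ∀ y ∈ Ioo (0:ℝ) (π/2), DifferentiableAt ℝ q y :=
    fun y hy => (hd1 y hy).add ((hder1 y).differentiableAt.const_mul θ)
  have hqderiv : ∀ y ∈ Ioo (0:ℝ) (π/2), deriv q y = deriv d y + θ * h1f y := by
    intro y hy
    rw [hqdef]
    rw [deriv_fun_add (hd1 y hy) ((hder1 y).differentiableAt.const_mul θ),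
      deriv_const_mul θ (hder1 y).differentiableAt, (hder1 y).deriv]
  have hqev : deriv q =ᶠ[nhds z] fun y => deriv d y + θ * h1f y :=
    Filter.eventually_of_mem hIooMem hqderiv
  have hrhsDiff : DifferentiableAt ℝ (fun y => deriv d y + θ * h1f y) z :=
    (hd2 z hzIoo).add ((hder2 z).differentiableAt.const_mul θ)
  have hq2 : DifferentiableAt ℝ (deriv q) z := hrhsDiff.congr_of_eventuallyEq hqev
  have hval : deriv (deriv q) z = deriv (deriv d) z + θ * (-(γ^2) * h z) := by
    rw [hqev.deriv_eq,
      deriv_fun_add (hd2 z hzIoo) ((hder2 z).differentiableAt.const_mul θ),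
      deriv_const_mul θ (hder2 z).differentiableAt, (hder2 z).deriv]
  have hnn : 0 ≤ deriv (deriv q) z :=
    deriv2_nonneg_of_isLocalMin (Filter.eventually_of_mem hIooMem hqd) hq2 hqmin
  have hid := hineq z hzIoo hdz
  have hkey : -(deriv (deriv d) z) ≤ γ^2 * d z := by
    rw [hval] at hnn
    rw [hdz_eq]
    nlinarith
  nlinarith


lemma hasDerivAt_sin2 (y : ℝ) :
    HasDerivAt (fun t => Real.sin (2*t)) (2*Real.cos (2*y)) y := by
  have h : HasDerivAt (fun t : ℝ => 2*t) 2 y := by simpa using (hasDerivAt_id y).const_mul 2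
  have h3 := (Real.hasDerivAt_sin (2*y)).comp y h
  exact h3.congr_deriv (by ring)

lemma hasDerivAt_cos2mul (y : ℝ) :
    HasDerivAt (fun t => 2*Real.cos (2*t)) (-4*Real.sin (2*y)) y := by
  have h : HasDerivAt (fun t : ℝ => 2*t) 2 y := by simpa using (hasDerivAt_id y).const_mul 2
  have h2 := ((Real.hasDerivAt_cos (2*y)).comp y h).const_mul 2
  exact h2.congr_deriv (by ring)

lemma hasDerivAt_usig {σ : ℝ} {y : ℝ} (hy : 0 < Real.sin (2*y)) :
    HasDerivAt (fun t => Real.sin (2*t) ^ σ)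
      (σ * Real.sin (2*y) ^ (σ-1) * (2*Real.cos (2*y))) y := by
  have h := (hasDerivAt_sin2 y).rpow_const (p := σ) (Or.inl hy.ne')
  convert h using 1
  ring

lemma hasDerivAt_usig' {σ : ℝ} {y : ℝ} (hy : 0 < Real.sin (2*y)) :
    HasDerivAt (fun t => σ * Real.sin (2*t) ^ (σ-1) * (2*Real.cos (2*t)))
      (4*σ*(σ-1)*Real.cos (2*y)^2 * Real.sin (2*y)^(σ-2) - 4*σ*Real.sin (2*y)^σ) y := by
  have h1 : HasDerivAt (fun t => σ * Real.sin (2*t) ^ (σ-1))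
      (σ*((σ-1) * Real.sin (2*y) ^ (σ-1-1) * (2*Real.cos (2*y)))) y := by
    have h := ((hasDerivAt_sin2 y).rpow_const (p := σ-1) (Or.inl hy.ne')).const_mul σ
    exact h.congr_deriv (by ring)
  have h3 := h1.mul (hasDerivAt_cos2mul y)
  refine h3.congr_deriv ?_
  have e1 : Real.sin (2*y) ^ (σ-1-1) = Real.sin (2*y) ^ (σ-2) := by
    rw [show σ-1-1 = σ-2 by ring]
  have e2 : Real.sin (2*y) ^ (σ-1) * Real.sin (2*y) = Real.sin (2*y) ^ σ := by
    rw [← Real.rpow_add_one hy.ne' (σ-1), show σ-1+1 = σ by ring]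
  rw [e1, ← e2]; ring


set_option maxHeartbeats 2000000 in
/-- A priori sandwich bound: for `-2 < β < 0`, `c₁, c₂ ≥ 0` not both zero,
`s = -1-2/β`, `s' = -1-3/β`, and `σ ≠ 1` with `β²/4 < σ ≤ min{1, -2β/3}`, there are
constants `a, b > 0` (independent of `w`) such that every positive solution
`w ∈ C²(0,π/2) ∩ C[0,π/2]` of `-w'' = β²w + c₁w^{-s} + c₂ sin φ w^{-s'}` with
`w(0) = w(π/2) = 0` satisfies `a sin 2φ ≤ w(φ) ≤ b (sin 2φ)^σ` on `(0,π/2)`.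
(Note `-s = 1+2/β`, `-s' = 1+3/β`.) -/
theorem apriori_sandwich (β c1 c2 σ : ℝ) (hβ1 : -2 < β) (hβ2 : β < 0)
    (hc1 : 0 ≤ c1) (hc2 : 0 ≤ c2) (hc : c1 ≠ 0 ∨ c2 ≠ 0)
    (hσ1 : β ^ 2 / 4 < σ) (hσ2 : σ ≤ min 1 (-2*β/3)) (hσ3 : σ ≠ 1) :
    ∃ a > (0:ℝ), ∃ b > (0:ℝ), ∀ w : ℝ → ℝ,
      ContinuousOn w (Set.Icc 0 (Real.pi/2)) →
      (∀ φ ∈ Set.Ioo (0:ℝ) (Real.pi/2), DifferentiableAt ℝ w φ) →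
      (∀ φ ∈ Set.Ioo (0:ℝ) (Real.pi/2), DifferentiableAt ℝ (deriv w) φ) →
      (∀ φ ∈ Set.Ioo (0:ℝ) (Real.pi/2), 0 < w φ) →
      (∀ φ ∈ Set.Ioo (0:ℝ) (Real.pi/2),
        -(deriv (deriv w) φ) = β ^ 2 * w φ + c1 * w φ ^ (1 + 2/β)
          + c2 * Real.sin φ * w φ ^ (1 + 3/β)) →
      w 0 = 0 → w (Real.pi/2) = 0 →
      ∀ φ ∈ Set.Ioo (0:ℝ) (Real.pi/2),
        a * Real.sin (2*φ) ≤ w φ ∧ w φ ≤ b * Real.sin (2*φ) ^ σ := by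
  have hπ : (0:ℝ) < π := Real.pi_pos
  have hβne : β ≠ 0 := ne_of_lt hβ2
  have hβsqpos : 0 < β^2 := by positivity
  have hβsq4 : β^2 < 4 := by nlinarith
  have h4β : 0 < 4 - β^2 := by linarith
  have he1 : 1 + 2/β < 0 := by
    have h : 1 + 2/β = (β+2)/β := by field_simp
    rw [h]; exact div_neg_of_pos_of_neg (by linarith) hβ2
  have he2 : 1 + 3/β < 0 := by
    have h : 1 + 3/β = (β+3)/β := by field_simp
    rw [h]; exact div_neg_of_pos_of_neg (by linarith) hβ2
  have hσ0 : 0 < σ := by nlinarith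
  have hσle1 : σ ≤ 1 := le_trans hσ2 (min_le_left _ _)
  have hσlt1 : σ < 1 := lt_of_le_of_ne hσle1 hσ3
  have hσβ3 : σ ≤ -2*β/3 := le_trans hσ2 (min_le_right _ _)
  have hσβ : σ ≤ -β := by linarith
  have h4σ : β^2 < 4*σ := by linarith
  have hkey1 : σ - 2 ≤ σ * (1 + 2/β) := by
    have hd : σ*(1+2/β) - (σ-2) = (2*σ + 2*β)/β := by field_simp; ring
    have h2 : 0 ≤ (2*σ+2*β)/β := div_nonneg_of_nonpos (by linarith) hβ2.le
    linarith
  have hkey2 : σ - 2 ≤ σ * (1 + 3/β) := by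
    have hd : σ*(1+3/β) - (σ-2) = (3*σ + 2*β)/β := by field_simp; ring
    have h2 : 0 ≤ (3*σ+2*β)/β := div_nonneg_of_nonpos (by linarith) hβ2.le
    linarith
  have hneg1 : σ * (1+2/β) ≤ 0 := by nlinarith
  have hneg2 : σ * (1+3/β) ≤ 0 := by nlinarith
  have hσσ : 0 < σ*(1-σ) := by nlinarith
  obtain ⟨c₀, hc₀def⟩ : ∃ x : ℝ, x = min (σ*(1-σ)) ((4*σ - β^2)/16) := ⟨_, rfl⟩
  have hc₀ : 0 < c₀ := by rw [hc₀def]; exact lt_min hσσ (by linarith)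
  have hcm1 : c₀ ≤ σ*(1-σ) := by rw [hc₀def]; exact min_le_left _ _
  have hcm2 : c₀ ≤ (4*σ - β^2)/16 := by rw [hc₀def]; exact min_le_right _ _
  obtain ⟨b, hbdef⟩ : ∃ x : ℝ, x = max 1 ((c1+c2)/c₀) := ⟨_, rfl⟩
  have hb1 : (1:ℝ) ≤ b := by rw [hbdef]; exact le_max_left _ _
  have hbpos : 0 < b := lt_of_lt_of_le one_pos hb1
  have hbc : c1 + c2 ≤ b * c₀ := by
    have h := le_max_right 1 ((c1+c2)/c₀)
    rw [div_le_iff₀ hc₀] at h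
    rw [hbdef]
    exact h
  -- core supersolution inequality
  have hS : ∀ ψ ∈ Ioo (0:ℝ) (π/2), ∀ e : ℝ, σ - 2 ≤ σ*e → σ*e ≤ 0 →
      c₀ * Real.sin (2*ψ) ^ (σ*e) ≤
        σ*(1-σ)*(4*Real.cos (2*ψ)^2) * Real.sin (2*ψ) ^ (σ-2)
          + (4*σ - β^2) * Real.sin (2*ψ) ^ σ := by
    intro ψ hψ e hle hnp
    obtain ⟨s, hsdef⟩ : ∃ x : ℝ, x = Real.sin (2*ψ) := ⟨_, rfl⟩
    rw [← hsdef]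
    have hs : 0 < s := by
      rw [hsdef]
      exact Real.sin_pos_of_pos_of_lt_pi (by linarith [hψ.1]) (by linarith [hψ.2])
    have hs1 : s ≤ 1 := by rw [hsdef]; exact Real.sin_le_one _
    have hXnn : 0 ≤ s ^ (σ-2) := Real.rpow_nonneg hs.le _
    have hYnn : 0 ≤ s ^ σ := Real.rpow_nonneg hs.le _
    rcases le_or_gt (1/2 : ℝ) (Real.cos (2*ψ)^2) with hcos | hcos
    · have h1 : s ^ (σ*e) ≤ s ^ (σ-2) := Real.rpow_le_rpow_of_exponent_ge hs hs1 hle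
      have hA : c₀ * s^(σ*e) ≤ c₀ * s^(σ-2) := mul_le_mul_of_nonneg_left h1 hc₀.le
      have hB : c₀ * s^(σ-2) ≤ σ*(1-σ)*(4*Real.cos (2*ψ)^2) * s^(σ-2) := by
        apply mul_le_mul_of_nonneg_right _ hXnn
        linarith [hcm1, hσσ.le, mul_nonneg hσσ.le (by linarith : (0:ℝ) ≤ 4*Real.cos (2*ψ)^2 - 2)]
      linarith [mul_nonneg (by linarith : (0:ℝ) ≤ 4*σ - β^2) hYnn]
    · have hpyth := Real.sin_sq_add_cos_sq (2*ψ)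
      rw [← hsdef] at hpyth
      have h14 : ((1/2:ℝ))^2 ≤ s^2 := by linarith [hpyth, hcos]
      have hshalf : (1/2:ℝ) ≤ s := by
        have h15 := Real.sqrt_le_sqrt h14
        rwa [Real.sqrt_sq (by norm_num : (0:ℝ) ≤ 1/2), Real.sqrt_sq hs.le] at h15
      have h1 : s ^ (σ*e) ≤ s ^ (σ-2) := Real.rpow_le_rpow_of_exponent_ge hs hs1 hle
      have h2a : s ^ (σ-2) ≤ (1/2:ℝ) ^ (σ-2) :=
        Real.rpow_le_rpow_of_nonpos (by norm_num) hshalf (by linarith)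
      have h2b : (1/2:ℝ) ^ (σ-2) ≤ (1/2:ℝ) ^ (-2:ℝ) :=
        Real.rpow_le_rpow_of_exponent_ge (by norm_num) (by norm_num) (by linarith)
      have h2c : (1/2:ℝ) ^ (-2:ℝ) = 4 := by
        rw [show ((-2:ℝ)) = ((-2:ℤ):ℝ) by norm_num, Real.rpow_intCast]
        norm_num
      have h2 : s ^ (σ*e) ≤ 4 := by rw [h2c] at h2b; linarith
      have h3 : s ≤ s ^ σ := by
        have h := Real.rpow_le_rpow_of_exponent_ge hs hs1 hσle1
        rwa [Real.rpow_one] at h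
      have hZnn : 0 ≤ s ^ (σ*e) := Real.rpow_nonneg hs.le _
      have hc4 : c₀ * s^(σ*e) ≤ c₀ * 4 := mul_le_mul_of_nonneg_left h2 hc₀.le
      have hfin : c₀ * 4 ≤ (4*σ-β^2) * s^σ := by
        linarith [mul_le_mul_of_nonneg_left (show (1/2:ℝ) ≤ s^σ by linarith)
          (show (0:ℝ) ≤ 4*σ-β^2 by linarith), hcm2]
      linarith [mul_nonneg (mul_nonneg hσσ.le
        (by positivity : (0:ℝ) ≤ 4*Real.cos (2*ψ)^2)) hXnn, hc4, hfin]
  -- subsolution choice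
  have hsubchoice : ∃ a : ℝ, 0 < a ∧ ∀ ψ ∈ Ioo (0:ℝ) (π/2),
      (4 - β^2) * (a * Real.sin (2*ψ)) ≤
        c1 * (a * Real.sin (2*ψ)) ^ (1+2/β)
          + c2 * Real.sin ψ * (a * Real.sin (2*ψ)) ^ (1+3/β) := by
    rcases hc with hc1ne | hc2ne
    · have hc1p : 0 < c1 := lt_of_le_of_ne hc1 (Ne.symm hc1ne)
      have hp : 0 < -2/β := by
        rw [show (-2:ℝ)/β = 2/(-β) by rw [neg_div, div_neg]]
        exact div_pos (by norm_num) (by linarith)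
      have hdivp : 0 < c1/(4-β^2) := div_pos hc1p h4β
      set a := (c1/(4-β^2)) ^ ((1:ℝ)/(-2/β)) with hadef
      have ha : 0 < a := Real.rpow_pos_of_pos hdivp _
      have hap : a ^ (-2/β) = c1/(4-β^2) := by
        rw [hadef, ← Real.rpow_mul hdivp.le, one_div_mul_cancel (ne_of_gt hp), Real.rpow_one]
      have hsplit : (4-β^2) * a = c1 * a ^ (1+2/β) := by
        have h1 : a = a ^ (-2/β) * a ^ (1+2/β) := by
          rw [← Real.rpow_add ha, show -2/β + (1+2/β) = 1 by field_simp <;> ring, Real.rpow_one]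
        calc (4-β^2)*a = (4-β^2)*(a^(-2/β) * a^(1+2/β)) := by rw [← h1]
        _ = (4-β^2)*(c1/(4-β^2)) * a^(1+2/β) := by rw [hap]; ring
        _ = c1 * a^(1+2/β) := by field_simp
      refine ⟨a, ha, fun ψ hψ => ?_⟩
      have hs : 0 < Real.sin (2*ψ) :=
        Real.sin_pos_of_pos_of_lt_pi (by linarith [hψ.1]) (by linarith [hψ.2])
      have hs1 : Real.sin (2*ψ) ≤ 1 := Real.sin_le_one _
      have hsφ : 0 ≤ Real.sin ψ :=
        Real.sin_nonneg_of_nonneg_of_le_pi hψ.1.le (by linarith [hψ.2])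
      have hterm2 : 0 ≤ c2 * Real.sin ψ * (a*Real.sin (2*ψ)) ^ (1+3/β) :=
        mul_nonneg (mul_nonneg hc2 hsφ) (Real.rpow_nonneg (by positivity) _)
      have hsle : Real.sin (2*ψ) ≤ Real.sin (2*ψ) ^ (1+2/β) := by
        have h := Real.rpow_le_rpow_of_exponent_ge hs hs1 (show 1+2/β ≤ 1 by linarith)
        rwa [Real.rpow_one] at h
      have hmul : (a * Real.sin (2*ψ)) ^ (1+2/β)
          = a ^ (1+2/β) * Real.sin (2*ψ) ^ (1+2/β) := Real.mul_rpow ha.le hs.le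
      have hstep : (4-β^2)*(a*Real.sin (2*ψ)) ≤ c1 * (a*Real.sin (2*ψ)) ^ (1+2/β) := by
        calc (4-β^2)*(a*Real.sin (2*ψ)) = (c1 * a^(1+2/β)) * Real.sin (2*ψ) := by
              rw [show (4-β^2)*(a*Real.sin (2*ψ)) = ((4-β^2)*a)*Real.sin (2*ψ) by ring, hsplit]
        _ ≤ (c1 * a^(1+2/β)) * Real.sin (2*ψ)^(1+2/β) := by
              apply mul_le_mul_of_nonneg_left hsle
              positivity
        _ = c1 * (a*Real.sin (2*ψ))^(1+2/β) := by rw [hmul]; ring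
      linarith
    · have hc2p : 0 < c2 := lt_of_le_of_ne hc2 (Ne.symm hc2ne)
      have hp : 0 < -3/β := by
        rw [show (-3:ℝ)/β = 3/(-β) by rw [neg_div, div_neg]]
        exact div_pos (by norm_num) (by linarith)
      have hdivp : 0 < c2/(2*(4-β^2)) := div_pos hc2p (by linarith)
      set a := (c2/(2*(4-β^2))) ^ ((1:ℝ)/(-3/β)) with hadef
      have ha : 0 < a := Real.rpow_pos_of_pos hdivp _
      have hap : a ^ (-3/β) = c2/(2*(4-β^2)) := by
        rw [hadef, ← Real.rpow_mul hdivp.le, one_div_mul_cancel (ne_of_gt hp), Real.rpow_one]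
      have hsplit : 2*(4-β^2) * a = c2 * a ^ (1+3/β) := by
        have h1 : a = a ^ (-3/β) * a ^ (1+3/β) := by
          rw [← Real.rpow_add ha, show -3/β + (1+3/β) = 1 by field_simp <;> ring, Real.rpow_one]
        calc 2*(4-β^2)*a = 2*(4-β^2)*(a^(-3/β) * a^(1+3/β)) := by rw [← h1]
        _ = 2*(4-β^2)*(c2/(2*(4-β^2))) * a^(1+3/β) := by rw [hap]; ring
        _ = c2 * a^(1+3/β) := by field_simp <;> ring
      refine ⟨a, ha, fun ψ hψ => ?_⟩
      have hs : 0 < Real.sin (2*ψ) :=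
        Real.sin_pos_of_pos_of_lt_pi (by linarith [hψ.1]) (by linarith [hψ.2])
      have hs1 : Real.sin (2*ψ) ≤ 1 := Real.sin_le_one _
      have hsφ : 0 ≤ Real.sin ψ :=
        Real.sin_nonneg_of_nonneg_of_le_pi hψ.1.le (by linarith [hψ.2])
      have hterm1 : 0 ≤ c1 * (a*Real.sin (2*ψ)) ^ (1+2/β) :=
        mul_nonneg hc1 (Real.rpow_nonneg (by positivity) _)
      have hone : (1:ℝ) ≤ Real.sin (2*ψ) ^ (1+3/β) := by
        have h := Real.rpow_le_rpow_of_exponent_ge hs hs1 he2.le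
        rwa [Real.rpow_zero] at h
      have hsle2 : Real.sin (2*ψ) ≤ 2*Real.sin ψ := by
        rw [Real.sin_two_mul]
        linarith [mul_nonneg hsφ (by linarith [Real.cos_le_one ψ] : (0:ℝ) ≤ 1 - Real.cos ψ)]
      have hmul : (a * Real.sin (2*ψ)) ^ (1+3/β)
          = a ^ (1+3/β) * Real.sin (2*ψ) ^ (1+3/β) := Real.mul_rpow ha.le hs.le
      have hstep : (4-β^2)*(a*Real.sin (2*ψ))
          ≤ c2 * Real.sin ψ * (a*Real.sin (2*ψ)) ^ (1+3/β) := by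
        have hone' : c2 * a^(1+3/β) * Real.sin ψ
            ≤ c2 * a^(1+3/β) * Real.sin ψ * Real.sin (2*ψ)^(1+3/β) := by
          have hnn : 0 ≤ c2 * a^(1+3/β) * Real.sin ψ := by positivity
          linarith [mul_nonneg hnn (by linarith [hone] : (0:ℝ) ≤ Real.sin (2*ψ)^(1+3/β) - 1)]
        calc (4-β^2)*(a*Real.sin (2*ψ)) ≤ (4-β^2)*(a*(2*Real.sin ψ)) := by
              linarith [mul_le_mul_of_nonneg_left hsle2 (mul_nonneg h4β.le ha.le)]
        _ = (2*(4-β^2)*a) * Real.sin ψ := by ring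
        _ = (c2 * a^(1+3/β)) * Real.sin ψ := by rw [hsplit]
        _ ≤ c2 * a^(1+3/β) * Real.sin ψ * Real.sin (2*ψ)^(1+3/β) := hone'
        _ = c2 * Real.sin ψ * (a*Real.sin (2*ψ))^(1+3/β) := by rw [hmul]; ring
      linarith
  obtain ⟨a, ha, hsub⟩ := hsubchoice
  refine ⟨a, ha, b, hbpos, ?_⟩
  intro w hwc hw1 hw2 hwpos heq hw0 hwpi
  have hsin2cont : Continuous (fun t : ℝ => Real.sin (2*t)) :=
    Real.continuous_sin.comp (continuous_const.mul continuous_id)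
  -- LOWER BOUND
  have hderL : ∀ y ∈ Ioo (0:ℝ) (π/2),
      deriv (fun t => w t - a * Real.sin (2*t)) y = deriv w y - a*(2*Real.cos (2*y)) := by
    intro y hy
    rw [deriv_fun_sub (hw1 y hy) ((hasDerivAt_sin2 y).const_mul a).differentiableAt,
      ((hasDerivAt_sin2 y).const_mul a).deriv]
  have hd2L : ∀ ψ ∈ Ioo (0:ℝ) (π/2),
      DifferentiableAt ℝ (deriv (fun t => w t - a * Real.sin (2*t))) ψ ∧
      deriv (deriv (fun t => w t - a * Real.sin (2*t))) ψ
        = deriv (deriv w) ψ - a*(-4*Real.sin (2*ψ)) := by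
    intro ψ hψ
    have hev : deriv (fun t => w t - a * Real.sin (2*t))
        =ᶠ[nhds ψ] (fun y => deriv w y - a*(2*Real.cos (2*y))) :=
      Filter.eventually_of_mem (isOpen_Ioo.mem_nhds hψ) hderL
    have hrhs : DifferentiableAt ℝ (fun y => deriv w y - a*(2*Real.cos (2*y))) ψ :=
      (hw2 ψ hψ).sub ((hasDerivAt_cos2mul ψ).const_mul a).differentiableAt
    refine ⟨hrhs.congr_of_eventuallyEq hev, ?_⟩
    rw [hev.deriv_eq, deriv_fun_sub (hw2 ψ hψ) ((hasDerivAt_cos2mul ψ).const_mul a).differentiableAt,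
      ((hasDerivAt_cos2mul ψ).const_mul a).deriv]
  have hlow : ∀ ψ ∈ Icc (0:ℝ) (π/2), 0 ≤ w ψ - a * Real.sin (2*ψ) := by
    apply maxPrinciple hβsq4
    · exact hwc.sub (continuous_const.mul hsin2cont).continuousOn
    · exact fun ψ hψ => (hw1 ψ hψ).sub ((hasDerivAt_sin2 ψ).const_mul a).differentiableAt
    · exact fun ψ hψ => (hd2L ψ hψ).1
    · intro ψ hψ hdneg
      rw [(hd2L ψ hψ).2]
      have hs : 0 < Real.sin (2*ψ) :=
        Real.sin_pos_of_pos_of_lt_pi (by linarith [hψ.1]) (by linarith [hψ.2])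
      have hwp := hwpos ψ hψ
      have hwlt : w ψ < a * Real.sin (2*ψ) := by linarith
      have hm1 : (a*Real.sin (2*ψ))^(1+2/β) ≤ w ψ^(1+2/β) :=
        Real.rpow_le_rpow_of_nonpos hwp hwlt.le he1.le
      have hm2 : (a*Real.sin (2*ψ))^(1+3/β) ≤ w ψ^(1+3/β) :=
        Real.rpow_le_rpow_of_nonpos hwp hwlt.le he2.le
      have hsφ : 0 ≤ Real.sin ψ :=
        Real.sin_nonneg_of_nonneg_of_le_pi hψ.1.le (by linarith [hψ.2])
      have hsubψ := hsub ψ hψ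
      have heqψ := heq ψ hψ
      have hmm1 : c1 * (a*Real.sin (2*ψ))^(1+2/β) ≤ c1 * w ψ^(1+2/β) :=
        mul_le_mul_of_nonneg_left hm1 hc1
      have hmm2 : c2 * Real.sin ψ * (a*Real.sin (2*ψ))^(1+3/β)
          ≤ c2 * Real.sin ψ * w ψ^(1+3/β) :=
        mul_le_mul_of_nonneg_left hm2 (mul_nonneg hc2 hsφ)
      linarith [hsubψ, hmm1, hmm2, heqψ]
    · simp [hw0]
    · rw [show (2:ℝ)*(π/2) = π by ring]
      simp [hwpi]
  -- UPPER BOUND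
  have hderU : ∀ y ∈ Ioo (0:ℝ) (π/2),
      deriv (fun t => b * Real.sin (2*t) ^ σ - w t) y
        = b*(σ * Real.sin (2*y) ^ (σ-1) * (2*Real.cos (2*y))) - deriv w y := by
    intro y hy
    have hs : 0 < Real.sin (2*y) :=
      Real.sin_pos_of_pos_of_lt_pi (by linarith [hy.1]) (by linarith [hy.2])
    rw [deriv_fun_sub ((hasDerivAt_usig hs).const_mul b).differentiableAt (hw1 y hy),
      ((hasDerivAt_usig hs).const_mul b).deriv]
  have hd2U : ∀ ψ ∈ Ioo (0:ℝ) (π/2),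
      DifferentiableAt ℝ (deriv (fun t => b * Real.sin (2*t) ^ σ - w t)) ψ ∧
      deriv (deriv (fun t => b * Real.sin (2*t) ^ σ - w t)) ψ
        = b*(4*σ*(σ-1)*Real.cos (2*ψ)^2 * Real.sin (2*ψ)^(σ-2) - 4*σ*Real.sin (2*ψ)^σ)
          - deriv (deriv w) ψ := by
    intro ψ hψ
    have hs : 0 < Real.sin (2*ψ) :=
      Real.sin_pos_of_pos_of_lt_pi (by linarith [hψ.1]) (by linarith [hψ.2])
    have hev : deriv (fun t => b * Real.sin (2*t) ^ σ - w t)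
        =ᶠ[nhds ψ] (fun y => b*(σ * Real.sin (2*y) ^ (σ-1) * (2*Real.cos (2*y))) - deriv w y) :=
      Filter.eventually_of_mem (isOpen_Ioo.mem_nhds hψ) hderU
    have hrhs : DifferentiableAt ℝ
        (fun y => b*(σ * Real.sin (2*y) ^ (σ-1) * (2*Real.cos (2*y))) - deriv w y) ψ :=
      ((hasDerivAt_usig' hs).const_mul b).differentiableAt.sub (hw2 ψ hψ)
    refine ⟨hrhs.congr_of_eventuallyEq hev, ?_⟩
    rw [hev.deriv_eq,
      deriv_fun_sub ((hasDerivAt_usig' hs).const_mul b).differentiableAt (hw2 ψ hψ),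
      ((hasDerivAt_usig' hs).const_mul b).deriv]
  have hup : ∀ ψ ∈ Icc (0:ℝ) (π/2), 0 ≤ b * Real.sin (2*ψ) ^ σ - w ψ := by
    apply maxPrinciple hβsq4
    · refine (ContinuousOn.mul continuousOn_const ?_).sub hwc
      exact ContinuousOn.rpow_const hsin2cont.continuousOn (fun x hx => Or.inr hσ0.le)
    · intro ψ hψ
      have hs : 0 < Real.sin (2*ψ) :=
        Real.sin_pos_of_pos_of_lt_pi (by linarith [hψ.1]) (by linarith [hψ.2])
      exact ((hasDerivAt_usig hs).const_mul b).differentiableAt.sub (hw1 ψ hψ)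
    · exact fun ψ hψ => (hd2U ψ hψ).1
    · intro ψ hψ hdneg
      rw [(hd2U ψ hψ).2]
      obtain ⟨s, hsdef⟩ : ∃ x : ℝ, x = Real.sin (2*ψ) := ⟨_, rfl⟩
      rw [← hsdef] at hdneg ⊢
      have hs : 0 < s := by
        rw [hsdef]
        exact Real.sin_pos_of_pos_of_lt_pi (by linarith [hψ.1]) (by linarith [hψ.2])
      have hwp := hwpos ψ hψ
      have hbs : 0 < b * s^σ := by positivity
      have hwgt : b * s^σ < w ψ := by linarith
      have hsφ : 0 ≤ Real.sin ψ :=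
        Real.sin_nonneg_of_nonneg_of_le_pi hψ.1.le (by linarith [hψ.2])
      have hsφ1 : Real.sin ψ ≤ 1 := Real.sin_le_one ψ
      have heqψ := heq ψ hψ
      have hm1 : w ψ^(1+2/β) ≤ (b*s^σ)^(1+2/β) :=
        Real.rpow_le_rpow_of_nonpos hbs hwgt.le he1.le
      have hm2 : w ψ^(1+3/β) ≤ (b*s^σ)^(1+3/β) :=
        Real.rpow_le_rpow_of_nonpos hbs hwgt.le he2.le
      have hfact1 : (b*s^σ)^(1+2/β) = b^(1+2/β) * s^(σ*(1+2/β)) := by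
        rw [Real.mul_rpow hbpos.le (Real.rpow_nonneg hs.le σ), ← Real.rpow_mul hs.le]
      have hfact2 : (b*s^σ)^(1+3/β) = b^(1+3/β) * s^(σ*(1+3/β)) := by
        rw [Real.mul_rpow hbpos.le (Real.rpow_nonneg hs.le σ), ← Real.rpow_mul hs.le]
      have hble1 : b^(1+2/β) ≤ 1 := Real.rpow_le_one_of_one_le_of_nonpos hb1 he1.le
      have hble2 : b^(1+3/β) ≤ 1 := Real.rpow_le_one_of_one_le_of_nonpos hb1 he2.le
      have hbge1 : 0 ≤ b^(1+2/β) := Real.rpow_nonneg hbpos.le _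
      have hbge2 : 0 ≤ b^(1+3/β) := Real.rpow_nonneg hbpos.le _
      have hZ1nn : 0 ≤ s^(σ*(1+2/β)) := Real.rpow_nonneg hs.le _
      have hZ2nn : 0 ≤ s^(σ*(1+3/β)) := Real.rpow_nonneg hs.le _
      have hS1 := hS ψ hψ (1+2/β) hkey1 hneg1
      have hS2 := hS ψ hψ (1+3/β) hkey2 hneg2
      rw [← hsdef] at hS1 hS2
      have hXnn : 0 ≤ s ^ (σ-2) := Real.rpow_nonneg hs.le _
      have hYnn : 0 ≤ s ^ σ := Real.rpow_nonneg hs.le _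
      have hSnn : 0 ≤ σ*(1-σ)*(4*Real.cos (2*ψ)^2) * s^(σ-2) + (4*σ - β^2) * s^σ :=
        add_nonneg (mul_nonneg (mul_nonneg hσσ.le
          (by positivity : (0:ℝ) ≤ 4*Real.cos (2*ψ)^2)) hXnn)
          (mul_nonneg (by linarith) hYnn)
      have t1 : c1*(c₀ * s^(σ*(1+2/β))) ≤
          c1*(σ*(1-σ)*(4*Real.cos (2*ψ)^2) * s^(σ-2) + (4*σ - β^2) * s^σ) :=
        mul_le_mul_of_nonneg_left hS1 hc1
      have t2 : c2*(c₀ * s^(σ*(1+3/β))) ≤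
          c2*(σ*(1-σ)*(4*Real.cos (2*ψ)^2) * s^(σ-2) + (4*σ - β^2) * s^σ) :=
        mul_le_mul_of_nonneg_left hS2 hc2
      have t3 : (c1+c2)*(σ*(1-σ)*(4*Real.cos (2*ψ)^2) * s^(σ-2) + (4*σ - β^2) * s^σ)
          ≤ (b*c₀)*(σ*(1-σ)*(4*Real.cos (2*ψ)^2) * s^(σ-2) + (4*σ - β^2) * s^σ) :=
        mul_le_mul_of_nonneg_right hbc hSnn
      have t5 : c1 * s^(σ*(1+2/β)) + c2 * s^(σ*(1+3/β))
          ≤ b*(σ*(1-σ)*(4*Real.cos (2*ψ)^2) * s^(σ-2) + (4*σ - β^2) * s^σ) := by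
        have t4 : c₀*(c1 * s^(σ*(1+2/β)) + c2 * s^(σ*(1+3/β)))
            ≤ c₀*(b*(σ*(1-σ)*(4*Real.cos (2*ψ)^2) * s^(σ-2) + (4*σ - β^2) * s^σ)) := by
          linarith [t1, t2, t3]
        exact le_of_mul_le_mul_left t4 hc₀
      have u1 : c1 * w ψ^(1+2/β) ≤ c1 * s^(σ*(1+2/β)) := by
        have h := mul_le_mul_of_nonneg_left hm1 hc1
        rw [hfact1] at h
        have hprod : 0 ≤ c1 * s^(σ*(1+2/β)) * (1 - b^(1+2/β)) :=
          mul_nonneg (mul_nonneg hc1 hZ1nn) (by linarith)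
        linarith [h, hprod]
      have u2 : c2 * Real.sin ψ * w ψ^(1+3/β) ≤ c2 * s^(σ*(1+3/β)) := by
        have h := mul_le_mul_of_nonneg_left hm2 (mul_nonneg hc2 hsφ)
        rw [hfact2] at h
        have hsb : Real.sin ψ * b^(1+3/β) ≤ 1 := by
          linarith [mul_nonneg hsφ (show (0:ℝ) ≤ 1 - b^(1+3/β) by linarith)]
        have hprod : 0 ≤ c2 * s^(σ*(1+3/β)) * (1 - Real.sin ψ * b^(1+3/β)) :=
          mul_nonneg (mul_nonneg hc2 hZ2nn) (by linarith)
        linarith [h, hprod]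
      have hNle : c1 * w ψ^(1+2/β) + c2*Real.sin ψ*w ψ^(1+3/β)
          ≤ b*(σ*(1-σ)*(4*Real.cos (2*ψ)^2) * s^(σ-2) + (4*σ - β^2) * s^σ) := by
        linarith
      linarith [heqψ, hNle]
    · rw [show (2:ℝ)*0 = 0 by ring]
      rw [Real.sin_zero, Real.zero_rpow (ne_of_gt hσ0), hw0]
      norm_num
    · rw [show (2:ℝ)*(π/2) = π by ring]
      rw [Real.sin_pi, Real.zero_rpow (ne_of_gt hσ0), hwpi]
      norm_num
  intro φ hφ
  have h1 := hlow φ (Ioo_subset_Icc_self hφ)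
  have h2 := hup φ (Ioo_subset_Icc_self hφ)
  constructor <;> linarith
end
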